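/- arXiv:1512.01781 — 3 statements merged into one kernel-verified Lean document; each statement's English description precedes it below -/
import Mathlib

section
/- Let G = (V, E) be a multigraph, let k ≥ 2 be an integer, let U ⊆ E be a submultiset such that (V, U) is a k-trail, and let C ⊆ E ∖ U be the edge multiset of a cycle in the multigraph (V, E ∖ U). Then (V, U ∪ C) is also a k-trail. -/
/-- A multigraph on vertex type `V`: a finite multiset of unordered pairs of
vertices (loops and parallel edges allowed). -/
structure Multigraph (V : Type) where
  edges : Multiset (Sym2 V)

namespace Multigraph

open Classical in
/-- The degree of a vertex: number of edge-endpoints at `v`, a loop counting twice. -/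
noncomputable def deg {V : Type} (G : Multigraph V) (v : V) : ℕ :=
  (G.edges.map fun e => if e = Sym2.diag v then 2 else if v ∈ e then 1 else 0).sum

/-- Adjacency in a multigraph. -/
def Adj {V : Type} (G : Multigraph V) (u v : V) : Prop := s(u, v) ∈ G.edges

/-- A multigraph is connected if it has a vertex and any two vertices are joined by a walk. -/
def Connected {V : Type} (G : Multigraph V) : Prop :=
  Nonempty V ∧ ∀ u v : V, Relation.ReflTransGen G.Adj u v

open Classical in
/-- `G` is the homomorphic image of `H` by the onto function `φ`: for all `u v`,
the number of edges of `G` between `u` and `v` equals the number of edges of `H`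
whose endpoints are mapped by `φ` to `{u, v}`. -/
def IsHomImage {V W : Type} (G : Multigraph V) (H : Multigraph W) (φ : W → V) : Prop :=
  Function.Surjective φ ∧
    ∀ u v : V, G.edges.count s(u, v) = (H.edges.map (Sym2.map φ)).count s(u, v)

/-- A tree: a connected multigraph with `|F| = |W| - 1`. -/
def IsTree {W : Type} (H : Multigraph W) : Prop :=
  Connected H ∧ Multiset.card H.edges + 1 = Nat.card W

/-- A multigraph is a `k`-trail if it is the homomorphic image of a (finite)
connected multigraph of maximum degree at most `k`. -/
def IsKTrail {V : Type} (G : Multigraph V) (k : ℕ) : Prop :=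
  ∃ (W : Type) (_ : Finite W) (H : Multigraph W) (φ : W → V),
    Connected H ∧ (∀ w, H.deg w ≤ k) ∧ IsHomImage G H φ

/-- `G` contains a `k`-trail if some submultiset `U` of its edges gives a `k`-trail `(V, U)`. -/
def ContainsKTrail {V : Type} (G : Multigraph V) (k : ℕ) : Prop :=
  ∃ U : Multiset (Sym2 V), U ≤ G.edges ∧ IsKTrail (Multigraph.mk U) k

/-- `lam` is a feasible multiplicity vector for `G`. -/
def FeasibleMult {V : Type} (G : Multigraph V) (lam : V → ℕ) : Prop :=
  ∃ (W : Type) (_ : Finite W) (H : Multigraph W) (φ : W → V),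
    Connected H ∧ IsHomImage G H φ ∧ ∀ v : V, Nat.card (φ ⁻¹' {v}) = lam v

end Multigraph

open Multigraph


/-- `C` is the edge multiset of a cycle in `G`: there are distinct vertices
`v_0, …, v_r` (`r + 1 ≥ 1` of them) such that `C` consists of the edges
`{v_i, v_{i+1}}` (indices mod `r + 1`), using distinct edge occurrences of `G`. -/
def IsCycleEdges {V : Type} (G : Multigraph V) (C : Multiset (Sym2 V)) : Prop :=
  ∃ (r : ℕ) (v : Fin (r + 1) → V), Function.Injective v ∧
    C = Multiset.map (fun i : Fin (r + 1) => s(v i, v (i + 1))) Finset.univ.val ∧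
    C ≤ G.edges

section KTrailAux

open Classical

open Classical in
noncomputable def wt {α : Type} (z : α) (e : Sym2 α) : ℕ :=
  if e = Sym2.diag z then 2 else if z ∈ e then 1 else 0

lemma deg_eq_sum {α : Type} (M : Multiset (Sym2 α)) (z : α) :
    Multigraph.deg ⟨M⟩ z = (M.map (wt z)).sum := rfl

lemma deg_add {α : Type} (A B : Multiset (Sym2 α)) (z : α) :
    Multigraph.deg ⟨A + B⟩ z = Multigraph.deg ⟨A⟩ z + Multigraph.deg ⟨B⟩ z := by
  simp [deg_eq_sum]

lemma deg_cons {α : Type} (a : Sym2 α) (A : Multiset (Sym2 α)) (z : α) :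
    Multigraph.deg ⟨a ::ₘ A⟩ z = wt z a + Multigraph.deg ⟨A⟩ z := by
  simp [deg_eq_sum]

lemma wt_map_inj {α β : Type} {f : α → β} (hf : Function.Injective f)
    (p : α) (e : Sym2 α) : wt (f p) (Sym2.map f e) = wt p e := by
  induction e using Sym2.ind with
  | _ a b =>
    rw [Sym2.map_pair_eq]
    unfold wt
    have h1 : s(f a, f b) = Sym2.diag (f p) ↔ s(a,b) = Sym2.diag p := by
      simp [Sym2.diag, Sym2.eq_iff, hf.eq_iff]
    have h2 : f p ∈ s(f a, f b) ↔ p ∈ s(a,b) := by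
      simp [Sym2.mem_iff, hf.eq_iff]
    by_cases hd : s(a,b) = Sym2.diag p
    · rw [if_pos (h1.mpr hd), if_pos hd]
    · rw [if_neg (fun h => hd (h1.mp h)), if_neg hd]
      by_cases hm : p ∈ s(a,b)
      · rw [if_pos (h2.mpr hm), if_pos hm]
      · rw [if_neg (fun h => hm (h2.mp h)), if_neg hm]

lemma wt_map_ne {α β : Type} (f : α → β) (z : β) (hz : ∀ a, f a ≠ z)
    (e : Sym2 α) : wt z (Sym2.map f e) = 0 := by
  induction e using Sym2.ind with
  | _ a b =>
    rw [Sym2.map_pair_eq]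
    unfold wt
    have h1 : ¬ (s(f a, f b) = Sym2.diag z) := by
      simp only [Sym2.diag, Sym2.eq_iff]
      rintro (⟨h,-⟩|⟨h,-⟩) <;> exact hz _ h
    have h2 : ¬ (z ∈ s(f a, f b)) := by
      simp only [Sym2.mem_iff]
      rintro (h|h) <;> exact hz _ h.symm
    rw [if_neg h1, if_neg h2]

lemma deg_map_inj {α β : Type} {f : α → β} (hf : Function.Injective f)
    (M : Multiset (Sym2 α)) (p : α) :
    Multigraph.deg ⟨M.map (Sym2.map f)⟩ (f p) = Multigraph.deg ⟨M⟩ p := by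
  rw [deg_eq_sum, deg_eq_sum, Multiset.map_map]
  congr 1
  exact Multiset.map_congr rfl (fun e _ => wt_map_inj hf p e)

lemma deg_map_ne {α β : Type} (f : α → β) (M : Multiset (Sym2 α)) (z : β)
    (hz : ∀ a, f a ≠ z) :
    Multigraph.deg ⟨M.map (Sym2.map f)⟩ z = 0 := by
  rw [deg_eq_sum, Multiset.map_map]
  apply Multiset.sum_eq_zero
  intro n hn
  obtain ⟨e, _, rfl⟩ := Multiset.mem_map.mp hn
  exact wt_map_ne f z hz e

lemma sym2_ext {V : Type} {M N : Multiset (Sym2 V)}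
    (h : ∀ u v : V, M.count s(u,v) = N.count s(u,v)) : M = N := by
  ext a
  induction a using Sym2.ind with
  | _ u v => exact h u v

lemma deg_cyc {r : ℕ} (j : Fin (r+1)) :
    Multigraph.deg ⟨(Finset.univ.val.map (fun i : Fin (r+1) => s(i, i+1)))⟩ j = 2 := by
  rw [deg_eq_sum, Multiset.map_map, ← Finset.sum_eq_multiset_sum]
  simp only [Function.comp_apply]
  rcases r with _ | r
  · rw [Fin.sum_univ_one]
    have h0 : j = 0 := Fin.fin_one_eq_zero j
    have h1 : ((0:Fin 1) + 1) = 0 := rfl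
    subst h0
    rw [h1]
    unfold wt
    rw [if_pos (show s((0:Fin 1),(0:Fin 1)) = Sym2.diag (0:Fin 1) from rfl)]
  · have step2 : (∑ x : Fin (r+1+1), ((if x = j then (1:ℕ) else 0) + (if x = j-1 then 1 else 0))) = 2 := by
      rw [Finset.sum_add_distrib,
        Finset.sum_ite_eq' Finset.univ j (fun _ => 1),
        Finset.sum_ite_eq' Finset.univ (j-1) (fun _ => 1)]
      simp
    refine Eq.trans (Finset.sum_congr rfl (fun i _ => ?_)) step2
    have hne : i ≠ i + 1 := by
      intro h
      exact one_ne_zero ((left_eq_add).mp h)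
    have hjj : j ≠ j - 1 := by
      intro h
      have h2 : j + 1 = j := by rw [eq_sub_iff_add_eq] at h; exact h
      exact one_ne_zero ((left_eq_add).mp h2.symm)
    unfold wt
    have hd : ¬ (s(i, i+1) = Sym2.diag j) := by
      simp only [Sym2.diag, Sym2.eq_iff]
      rintro (⟨rfl, h⟩ | ⟨rfl, h⟩) <;> exact hne h.symm
    rw [if_neg hd]
    have hm : j ∈ s(i, i+1) ↔ (i = j ∨ i = j - 1) := by
      rw [Sym2.mem_iff]
      constructor
      · rintro (rfl | h)
        · exact Or.inl rfl
        · right; rw [eq_sub_iff_add_eq]; exact h.symm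
      · rintro (rfl | rfl)
        · exact Or.inl rfl
        · right; simp
    by_cases h1 : i = j
    · have h2 : ¬ i = j - 1 := fun h => hjj (h1 ▸ h)
      rw [if_pos (hm.mpr (Or.inl h1)), if_pos h1, if_neg h2]
    · by_cases h2 : i = j - 1
      · rw [if_pos (hm.mpr (Or.inr h2)), if_neg h1, if_pos h2]
      · rw [if_neg (fun h => (hm.mp h).elim h1 h2), if_neg h1, if_neg h2]


open Classical in
noncomputable def ind (p : Prop) : ℕ := if p then 1 else 0

lemma ind_iff {p q : Prop} (h : p ↔ q) : ind p = ind q := by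
  unfold ind
  by_cases hp : p
  · rw [if_pos hp, if_pos (h.mp hp)]
  · rw [if_neg hp, if_neg (fun hq => hp (h.mpr hq))]

lemma ind_false {p : Prop} (h : ¬ p) : ind p = 0 := by
  unfold ind; rw [if_neg h]

lemma deg_singleton {α : Type} (a : Sym2 α) (z : α) :
    Multigraph.deg ⟨{a}⟩ z = wt z a := by
  simp [deg_eq_sum]

lemma wt_pair_eq {α : Type} (p a b : α) :
    wt p s(a, b) = ind (p = a) + ind (p = b) := by
  unfold wt ind
  by_cases hd : s(a,b) = Sym2.diag p
  · have hd2 : s(a,b) = s(p,p) := hd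
    obtain ⟨rfl, rfl⟩ : a = p ∧ b = p := by
      rcases Sym2.eq_iff.mp hd2 with ⟨h1, h2⟩ | ⟨h1, h2⟩ <;> exact ⟨h1, h2⟩
    rw [if_pos hd]
    simp
  · rw [if_neg hd]
    by_cases h1 : p = a
    · have h2 : ¬ p = b := fun h2 => hd (by rw [← h1, ← h2]; rfl)
      rw [if_pos (Sym2.mem_iff.mpr (Or.inl h1)), if_pos h1, if_neg h2]
    · by_cases h2 : p = b
      · rw [if_pos (Sym2.mem_iff.mpr (Or.inr h2)), if_neg h1, if_pos h2]
      · rw [if_neg (fun h => (Sym2.mem_iff.mp h).elim h1 h2), if_neg h1, if_neg h2]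

end KTrailAux

open Fin.NatCast

open Classical in
/-- Augmenting a `k`-trail by a cycle: if `(V, U)` is a `k`-trail contained in `G` and `C`
is the edge multiset of a cycle of `(V, E ∖ U)`, then `(V, U ∪ C)` is also a `k`-trail. -/
theorem kTrail_union_cycle {V : Type} [Finite V]
    (hV : 2 ≤ Nat.card V)
    (G : Multigraph V) (k : ℕ) (hk : 2 ≤ k)
    (U C : Multiset (Sym2 V)) (hU : U ≤ G.edges)
    (hUtrail : IsKTrail (Multigraph.mk U) k)
    (hC : IsCycleEdges (Multigraph.mk (G.edges - U)) C) :
    IsKTrail (Multigraph.mk (U + C)) k := by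
  classical
  obtain ⟨W, hWfin, H, φ, hconn, hdeg, hφs, hcnt⟩ := hUtrail
  haveI := hWfin
  obtain ⟨r, v, hvinj, hCeq, hCle⟩ := hC
  have hU_eq : U = H.edges.map (Sym2.map φ) := sym2_ext hcnt
  obtain ⟨w, hw⟩ := hφs (v 0)
  have hnt : Nontrivial V := Finite.one_lt_card_iff_nontrivial.mp (by omega)
  obtain ⟨v', hv'⟩ := exists_ne (v 0)
  obtain ⟨w', hw'⟩ := hφs v'
  have hww' : w ≠ w' := by
    rintro rfl
    exact hv' (hw'.symm.trans hw)
  obtain ⟨x, hx⟩ : ∃ x, s(w, x) ∈ H.edges := by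
    rcases Relation.ReflTransGen.cases_head (hconn.2 w w') with h | ⟨c, hc, -⟩
    · exact absurd h hww'
    · exact ⟨c, hc⟩
  set Hrest : Multiset (Sym2 W) := H.edges.erase s(w, x) with hHrest
  have hHsplit : s(w,x) ::ₘ Hrest = H.edges := Multiset.cons_erase hx
  set cycF : Fin (r+1) → Sym2 (Fin (r+1)) := fun i => s(i, i+1) with hcycF
  set cycRest : Multiset (Sym2 (Fin (r+1))) := (Finset.univ.val.erase 0).map cycF with hcycRestdef
  have hcycSplit : s((0:Fin (r+1)),1) ::ₘ cycRest = Finset.univ.val.map cycF := by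
    have h0 : (0:Fin (r+1)) ∈ Finset.univ.val := Finset.mem_val.mpr (Finset.mem_univ 0)
    have h1 : cycF 0 = s((0:Fin (r+1)),1) := by rw [hcycF]; norm_num
    calc s((0:Fin (r+1)),1) ::ₘ cycRest
        = (0 ::ₘ (Finset.univ.val.erase 0)).map cycF := by
          rw [Multiset.map_cons, h1, hcycRestdef]
      _ = Finset.univ.val.map cycF := by rw [Multiset.cons_erase h0]
  set φ' : W ⊕ Fin (r+1) → V := Sum.elim φ (fun i => v i) with hφ'
  set E' : Multiset (Sym2 (W ⊕ Fin (r+1))) :=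
    Hrest.map (Sym2.map Sum.inl) + cycRest.map (Sym2.map Sum.inr)
      + (s(Sum.inl w, Sum.inr 1) ::ₘ {s(Sum.inr 0, Sum.inl x)}) with hE'
  have hmem1 : s(Sum.inl w, (Sum.inr 1 : W ⊕ Fin (r+1))) ∈ E' := by
    rw [hE']
    exact Multiset.mem_add.mpr (Or.inr (Multiset.mem_cons_self _ _))
  have hmem2 : s((Sum.inr 0 : W ⊕ Fin (r+1)), Sum.inl x) ∈ E' := by
    rw [hE']
    refine Multiset.mem_add.mpr (Or.inr ?_)
    exact Multiset.mem_cons.mpr (Or.inr (Multiset.mem_singleton_self _))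
  have hmemC : ∀ i : Fin (r+1), i ≠ 0 → s((Sum.inr i : W ⊕ Fin (r+1)), Sum.inr (i+1)) ∈ E' := by
    intro i hi
    have h1 : s(i, i+1) ∈ cycRest := by
      rw [hcycRestdef]
      have hm : i ∈ Finset.univ.val.erase 0 :=
        (Multiset.mem_erase_of_ne hi).mpr (Finset.mem_val.mpr (Finset.mem_univ i))
      have hm2 := Multiset.mem_map_of_mem cycF hm
      rwa [hcycF] at hm2
    have h2 := Multiset.mem_map_of_mem (Sym2.map (Sum.inr : Fin (r+1) → W ⊕ Fin (r+1))) h1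
    rw [Sym2.map_pair_eq] at h2
    rw [hE']
    exact Multiset.mem_add.mpr (Or.inl (Multiset.mem_add.mpr (Or.inr h2)))
  have hmemH : ∀ a b : W, s(a,b) ∈ Hrest → s((Sum.inl a : W ⊕ Fin (r+1)), Sum.inl b) ∈ E' := by
    intro a b h
    have h2 := Multiset.mem_map_of_mem (Sym2.map (Sum.inl : W → W ⊕ Fin (r+1))) h
    rw [Sym2.map_pair_eq] at h2
    rw [hE']
    exact Multiset.mem_add.mpr (Or.inl (Multiset.mem_add.mpr (Or.inl h2)))
  refine ⟨W ⊕ Fin (r+1), inferInstance, ⟨E'⟩, φ', ?_, ?_, ?_, ?_⟩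
  · refine ⟨⟨Sum.inl w⟩, ?_⟩
    have hsym : Symmetric (Multigraph.Adj (⟨E'⟩ : Multigraph (W ⊕ Fin (r+1)))) := by
      intro a b h
      show s(b, a) ∈ E'
      rw [Sym2.eq_swap]
      exact h
    have hRsym : ∀ {a b : W ⊕ Fin (r+1)},
        Relation.ReflTransGen (Multigraph.Adj (⟨E'⟩ : Multigraph (W ⊕ Fin (r+1)))) a b →
        Relation.ReflTransGen (Multigraph.Adj (⟨E'⟩ : Multigraph (W ⊕ Fin (r+1)))) b a := by
      intro a b h
      induction h with
      | refl => exact Relation.ReflTransGen.refl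
      | tail _ hbc ih => exact Relation.ReflTransGen.head (hsym hbc) ih
    have reach : ∀ n : ℕ, n ≤ r →
        Relation.ReflTransGen (Multigraph.Adj (⟨E'⟩ : Multigraph (W ⊕ Fin (r+1))))
          (Sum.inl w) (Sum.inr ((n : Fin (r+1)) + 1)) := by
      intro n
      induction n with
      | zero =>
        intro _
        have h0 : ((0:ℕ) : Fin (r+1)) + 1 = 1 := by norm_num
        rw [h0]
        exact Relation.ReflTransGen.single hmem1
      | succ n ih =>
        intro hn
        have h1 := ih (Nat.le_of_succ_le hn)
        have hne : ((n+1 : ℕ) : Fin (r+1)) ≠ 0 := by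
          intro h0
          rw [Fin.natCast_eq_zero] at h0
          have := Nat.le_of_dvd (Nat.succ_pos n) h0
          omega
        have hcast : ((n : Fin (r+1)) + 1) = ((n+1 : ℕ) : Fin (r+1)) := by push_cast; ring
        rw [hcast] at h1
        exact h1.tail (hmemC _ hne)
    have reach0 : Relation.ReflTransGen (Multigraph.Adj (⟨E'⟩ : Multigraph (W ⊕ Fin (r+1))))
        (Sum.inl w) (Sum.inr 0) := by
      have h1 := reach r le_rfl
      have hc : ((r : Fin (r+1)) + 1) = 0 := by
        have h2 : ((r : Fin (r+1)) + 1) = ((r+1 : ℕ) : Fin (r+1)) := by push_cast; ring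
        rw [h2, Fin.natCast_self]
      rwa [hc] at h1
    have reachj : ∀ j : Fin (r+1),
        Relation.ReflTransGen (Multigraph.Adj (⟨E'⟩ : Multigraph (W ⊕ Fin (r+1))))
          (Sum.inl w) (Sum.inr j) := by
      intro j
      by_cases hj : j = 0
      · rw [hj]; exact reach0
      · have hj1 : 1 ≤ j.val := by
          rcases Nat.eq_zero_or_pos j.val with h | h
          · exact absurd (Fin.ext h) hj
          · exact h
        have h1 := reach (j.val - 1) (by omega)
        have hc : (((j.val - 1 : ℕ) : Fin (r+1)) + 1) = j := by
          have h2 : (((j.val - 1 : ℕ) : Fin (r+1)) + 1) = ((j.val - 1 + 1 : ℕ) : Fin (r+1)) := by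
            push_cast; ring
          rw [h2, show j.val - 1 + 1 = j.val by omega, Fin.cast_val_eq_self]
        rwa [hc] at h1
    have reachx : Relation.ReflTransGen (Multigraph.Adj (⟨E'⟩ : Multigraph (W ⊕ Fin (r+1))))
        (Sum.inl w) (Sum.inl x) := reach0.tail hmem2
    have liftadj : ∀ a b : W, H.Adj a b →
        Relation.ReflTransGen (Multigraph.Adj (⟨E'⟩ : Multigraph (W ⊕ Fin (r+1))))
          (Sum.inl a) (Sum.inl b) := by
      intro a b hab
      by_cases h : s(a,b) = s(w,x)
      · rcases Sym2.eq_iff.mp h with ⟨rfl, rfl⟩ | ⟨rfl, rfl⟩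
        · exact reachx
        · exact hRsym reachx
      · exact Relation.ReflTransGen.single (hmemH a b ((Multiset.mem_erase_of_ne h).mpr hab))
    have liftwalk : ∀ a b : W, Relation.ReflTransGen H.Adj a b →
        Relation.ReflTransGen (Multigraph.Adj (⟨E'⟩ : Multigraph (W ⊕ Fin (r+1))))
          (Sum.inl a) (Sum.inl b) := by
      intro a b hab
      induction hab with
      | refl => exact Relation.ReflTransGen.refl
      | tail _ h2 ih => exact ih.trans (liftadj _ _ h2)
    have hzw : ∀ z : W ⊕ Fin (r+1),
        Relation.ReflTransGen (Multigraph.Adj (⟨E'⟩ : Multigraph (W ⊕ Fin (r+1))))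
          z (Sum.inl w) := by
      rintro (a | j)
      · exact hRsym (liftwalk w a (hconn.2 w a))
      · exact hRsym (reachj j)
    intro z z'
    exact (hzw z).trans (hRsym (hzw z'))
  · rintro (p | j)
    · show Multigraph.deg ⟨E'⟩ (Sum.inl p) ≤ k
      have e1 : Multigraph.deg H p = wt p s(w,x) + Multigraph.deg ⟨Hrest⟩ p := by
        conv_lhs => rw [show H = ⟨H.edges⟩ from rfl, ← hHsplit]
        rw [deg_cons]
      have e2 : Multigraph.deg (⟨E'⟩ : Multigraph (W ⊕ Fin (r+1))) (Sum.inl p)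
          = Multigraph.deg ⟨Hrest⟩ p + 0
            + (wt (Sum.inl p : W ⊕ Fin (r+1)) s(Sum.inl w, Sum.inr 1)
              + wt (Sum.inl p : W ⊕ Fin (r+1)) s(Sum.inr 0, Sum.inl x)) := by
        rw [hE', deg_add, deg_add, deg_map_inj Sum.inl_injective,
          deg_map_ne Sum.inr _ _ (fun a => Sum.inr_ne_inl), deg_cons, deg_singleton]
      have i1 : ind ((Sum.inl p : W ⊕ Fin (r+1)) = Sum.inl w) = ind (p = w) := ind_iff (by simp)
      have i2 : ind ((Sum.inl p : W ⊕ Fin (r+1)) = Sum.inr 1) = 0 := ind_false (by simp)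
      have i3 : ind ((Sum.inl p : W ⊕ Fin (r+1)) = Sum.inr 0) = 0 := ind_false (by simp)
      have i4 : ind ((Sum.inl p : W ⊕ Fin (r+1)) = Sum.inl x) = ind (p = x) := ind_iff (by simp)
      have hk1 := hdeg p
      rw [e1, wt_pair_eq] at hk1
      rw [e2, wt_pair_eq, wt_pair_eq, i1, i2, i3, i4]
      omega
    · show Multigraph.deg ⟨E'⟩ (Sum.inr j) ≤ k
      have e1 : Multigraph.deg (⟨Finset.univ.val.map cycF⟩ : Multigraph (Fin (r+1))) j = 2 := by
        rw [hcycF]; exact deg_cyc j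
      have e2 : Multigraph.deg (⟨Finset.univ.val.map cycF⟩ : Multigraph (Fin (r+1))) j
          = wt j s((0:Fin (r+1)),1) + Multigraph.deg ⟨cycRest⟩ j := by
        rw [← hcycSplit, deg_cons]
      have e3 : Multigraph.deg (⟨E'⟩ : Multigraph (W ⊕ Fin (r+1))) (Sum.inr j)
          = 0 + Multigraph.deg ⟨cycRest⟩ j
            + (wt (Sum.inr j : W ⊕ Fin (r+1)) s(Sum.inl w, Sum.inr 1)
              + wt (Sum.inr j : W ⊕ Fin (r+1)) s(Sum.inr 0, Sum.inl x)) := by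
        rw [hE', deg_add, deg_add, deg_map_inj Sum.inr_injective,
          deg_map_ne Sum.inl _ _ (fun a => Sum.inl_ne_inr), deg_cons, deg_singleton]
      rw [e2, wt_pair_eq] at e1
      have i1 : ind ((Sum.inr j : W ⊕ Fin (r+1)) = Sum.inl w) = 0 := ind_false (by simp)
      have i2 : ind ((Sum.inr j : W ⊕ Fin (r+1)) = Sum.inr 1) = ind (j = 1) := ind_iff (by simp)
      have i3 : ind ((Sum.inr j : W ⊕ Fin (r+1)) = Sum.inr 0) = ind (j = 0) := ind_iff (by simp)
      have i4 : ind ((Sum.inr j : W ⊕ Fin (r+1)) = Sum.inl x) = 0 := ind_false (by simp)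
      rw [e3, wt_pair_eq, wt_pair_eq, i1, i2, i3, i4]
      omega
  · intro z
    obtain ⟨a, ha⟩ := hφs z
    exact ⟨Sum.inl a, by simpa [hφ'] using ha⟩
  · intro u u'
    have hmain : E'.map (Sym2.map φ') = U + C := by
      rw [hE', hφ', Multiset.map_add, Multiset.map_add, Multiset.map_map, Multiset.map_map,
        Multiset.map_cons, Multiset.map_singleton]
      have e1 : (Sym2.map (Sum.elim φ fun i => v i)) ∘ (Sym2.map (Sum.inl : W → W ⊕ Fin (r+1)))
          = Sym2.map φ := by
        funext e
        rw [Function.comp_apply, Sym2.map_map]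
        congr 1
      have e2 : (Sym2.map (Sum.elim φ fun i => v i))
            ∘ (Sym2.map (Sum.inr : Fin (r+1) → W ⊕ Fin (r+1)))
          = Sym2.map (fun i => v i) := by
        funext e
        rw [Function.comp_apply, Sym2.map_map]
        congr 1
      have c1 : Sym2.map (Sum.elim φ fun i => v i)
          s((Sum.inl w : W ⊕ Fin (r+1)), Sum.inr 1) = s(v 0, v 1) := by
        rw [Sym2.map_pair_eq]
        simp [hw]
      have c2 : Sym2.map (Sum.elim φ fun i => v i)
          s((Sum.inr 0 : W ⊕ Fin (r+1)), Sum.inl x) = s(v 0, φ x) := by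
        rw [Sym2.map_pair_eq]
        simp
      rw [e1, e2, c1, c2]
      have hU2 : U = s(v 0, φ x) ::ₘ Hrest.map (Sym2.map φ) := by
        rw [hU_eq, ← hHsplit, Multiset.map_cons, Sym2.map_pair_eq, hw]
      have hC2 : C = s(v 0, v 1) ::ₘ cycRest.map (Sym2.map fun i => v i) := by
        have e3 : Multiset.map (fun i : Fin (r+1) => s(v i, v (i + 1))) Finset.univ.val
            = (Finset.univ.val.map cycF).map (Sym2.map fun i => v i) := by
          rw [Multiset.map_map]
          apply Multiset.map_congr rfl
          intro i _
          simp only [Function.comp_apply, hcycF]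
          rw [Sym2.map_pair_eq]
        rw [hCeq, e3, ← hcycSplit, Multiset.map_cons, Sym2.map_pair_eq]
      rw [hU2, hC2]
      ext c
      simp only [Multiset.count_add, Multiset.count_cons, Multiset.count_singleton]
      split_ifs <;> omega
    show (U + C).count s(u, u') = (E'.map (Sym2.map φ')).count s(u, u')
    rw [hmain]
end

section
/- Let G = (V, E) be a multigraph, let k ≥ 2 be an integer, and let U ⊆ E be a submultiset such that (V, U) is a k-trail and |U| is maximum among all submultisets U' ⊆ E for which (V, U') is a k-trail. Then the multigraph (V, E ∖ U) is acyclic, i.e., contains no cycle. -/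
open Multigraph


-- Auxiliary definitions and lemmas

open Classical in
noncomputable def degE {V : Type} (v : V) (e : Sym2 V) : ℕ :=
  if e = Sym2.diag v then 2 else if v ∈ e then 1 else 0

lemma deg_eq {V : Type} (M : Multiset (Sym2 V)) (v : V) :
    deg ⟨M⟩ v = (M.map (degE v)).sum := rfl

open Classical in
lemma degE_mk {V : Type} (w a b : V) :
    degE w s(a,b) = if a = w ∧ b = w then 2 else if w = a ∨ w = b then 1 else 0 := by
  classical
  rw [degE]
  by_cases h1 : s(a,b) = Sym2.diag w
  · rw [if_pos h1]
    have : a = w ∧ b = w := by simpa [Sym2.diag, Sym2.eq_iff] using h1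
    rw [if_pos this]
  · rw [if_neg h1]
    have h1' : ¬ (a = w ∧ b = w) := by
      intro h; exact h1 (by simp [Sym2.diag, h.1, h.2])
    rw [if_neg h1']
    by_cases h2 : w ∈ s(a,b)
    · rw [if_pos h2, if_pos (by simpa [Sym2.mem_iff] using h2)]
    · rw [if_neg h2, if_neg (by simpa [Sym2.mem_iff] using h2)]

def aVert {W : Type} (w0 : W) {r : ℕ} (i : Fin (r+1)) : W ⊕ Fin (r+1) :=
  if i = 0 then Sum.inl w0 else Sum.inr i

def cycEdges {W : Type} (w0 : W) (r : ℕ) : Multiset (Sym2 (W ⊕ Fin (r+1))) :=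
  Multiset.map (fun i => s(aVert w0 i, Sum.inr (i+1))) Finset.univ.val

lemma deg_cyc_inr {W : Type} (w0 : W) (r : ℕ) (j : Fin (r+1)) :
    deg ⟨cycEdges w0 r⟩ (Sum.inr j) = if j = 0 then 1 else 2 := by
  classical
  rw [deg_eq, cycEdges, Multiset.map_map]
  have key : ∀ i : Fin (r+1),
      degE (Sum.inr j : W ⊕ Fin (r+1)) s(aVert w0 i, Sum.inr (i+1)) =
      (if i = j ∧ j ≠ 0 then 1 else 0) + (if i = j - 1 then 1 else 0) := by
    intro i
    by_cases hi : i = 0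
    · subst hi
      rw [aVert, if_pos rfl, degE_mk]
      have h1 : ¬ ((Sum.inl w0 : W ⊕ Fin (r+1)) = Sum.inr j ∧ (Sum.inr (0+1) : W ⊕ Fin (r+1)) = Sum.inr j) := by
        rintro ⟨h, -⟩; exact absurd h (by simp)
      rw [if_neg h1]
      by_cases hj : (0 : Fin (r+1)) = j - 1
      · have hcond : (Sum.inr j : W ⊕ Fin (r+1)) = Sum.inl w0 ∨ (Sum.inr j : W ⊕ Fin (r+1)) = Sum.inr (0+1) := by
          right
          have : (0 : Fin (r+1)) + 1 = j := eq_sub_iff_add_eq.mp hj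
          rw [this]
        rw [if_pos hcond, if_neg (by rintro ⟨h, h2⟩; exact h2 h.symm), if_pos hj]
      · have hcond : ¬ ((Sum.inr j : W ⊕ Fin (r+1)) = Sum.inl w0 ∨ (Sum.inr j : W ⊕ Fin (r+1)) = Sum.inr (0+1)) := by
          rintro (h | h)
          · exact absurd h (by simp)
          · exact hj (eq_sub_iff_add_eq.mpr (by simpa using h.symm))
        rw [if_neg hcond, if_neg (by rintro ⟨h, h2⟩; exact h2 h.symm), if_neg hj]
    · rw [aVert, if_neg hi, degE_mk]
      have hne01 : i ≠ i + 1 := by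
        intro h
        have h1 : (0 : Fin (r+1)) = 1 := by
          have := add_right_cancel (a := i) (b := (0:Fin (r+1))) (c := i)
          calc (0 : Fin (r+1)) = i - i := by rw [sub_self]
            _ = (i+1) - i := by rw [← h]
            _ = 1 := add_sub_cancel_left _ _
        have : r = 0 := by
          by_contra hr
          have : (1 : Fin (r+1)).val = 1 := by
            simp [Fin.val_one, Nat.mod_eq_of_lt]; omega
          rw [← h1] at this; simp at this
        subst this
        exact hi (Fin.ext (by omega))
      have hdiag : ¬ ((Sum.inr i : W ⊕ Fin (r+1)) = Sum.inr j ∧ (Sum.inr (i+1) : W ⊕ Fin (r+1)) = Sum.inr j) := by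
        rintro ⟨h1, h2⟩
        rw [Sum.inr.injEq] at h1 h2
        exact hne01 (h1.trans h2.symm)
      rw [if_neg hdiag]
      have hij : (i = j ∧ j ≠ 0) ↔ i = j := by
        constructor
        · exact fun h => h.1
        · intro h; exact ⟨h, fun hj0 => hi (by rw [h, hj0])⟩
      by_cases h1 : i = j <;> by_cases h2 : i = j - 1
      · exact absurd (h1.trans (eq_sub_iff_add_eq.mp h2).symm) hne01
      · rw [if_pos (by left; rw [h1]), if_pos (hij.mpr h1), if_neg h2]
      · rw [if_pos (by right; rw [eq_sub_iff_add_eq.mp h2]), if_neg (fun h => h1 (hij.mp h)),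
          if_pos h2]
      · rw [if_neg, if_neg (fun h => h1 (hij.mp h)), if_neg h2]
        rintro (h | h)
        · exact h1 (Sum.inr.injEq _ _ ▸ h.symm : i = j)
        · exact h2 (eq_sub_iff_add_eq.mpr (by simpa using h.symm))
  calc (Multiset.map (fun i => degE (Sum.inr j : W ⊕ Fin (r+1)) s(aVert w0 i, Sum.inr (i+1)))
          Finset.univ.val).sum
      = ∑ i : Fin (r+1), ((if i = j ∧ j ≠ 0 then 1 else 0) + (if i = j - 1 then 1 else 0)) := by
        rw [Finset.sum]
        exact congrArg Multiset.sum (Multiset.map_congr rfl (fun i _ => key i))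
    _ = (if j = 0 then 1 else 2) := by
        rw [Finset.sum_add_distrib, Finset.sum_ite_eq' Finset.univ (j-1) (fun _ => 1)]
        by_cases hj : j = 0
        · simp [hj]
        · rw [if_pos (Finset.mem_univ _)]
          have : ∀ i : Fin (r+1), (i = j ∧ j ≠ 0) = (i = j) := by
            intro i; simp [hj]
          simp only [this]
          rw [Finset.sum_ite_eq' Finset.univ j (fun _ => 1), if_pos (Finset.mem_univ _), if_neg hj]


open Classical in
lemma deg_cyc_inl {W : Type} (w0 : W) (r : ℕ) (w : W) :
    deg ⟨cycEdges w0 r⟩ (Sum.inl w) = if w = w0 then 1 else 0 := by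
  classical
  rw [deg_eq, cycEdges, Multiset.map_map]
  have key : ∀ i : Fin (r+1),
      degE (Sum.inl w : W ⊕ Fin (r+1)) s(aVert w0 i, Sum.inr (i+1)) =
      if i = 0 ∧ w = w0 then 1 else 0 := by
    intro i
    by_cases hi : i = 0
    · subst hi
      rw [aVert, if_pos rfl, degE_mk]
      rw [if_neg (by rintro ⟨-, h⟩; exact absurd h (by simp))]
      by_cases hw : w = w0
      · rw [if_pos (by left; rw [hw]), if_pos ⟨rfl, hw⟩]
      · rw [if_neg, if_neg (by rintro ⟨-, h⟩; exact hw h)]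
        rintro (h | h)
        · exact hw (by simpa using h)
        · exact absurd h (by simp)
    · rw [aVert, if_neg hi, degE_mk]
      rw [if_neg (by rintro ⟨h, -⟩; exact absurd h (by simp)),
        if_neg (by rintro (h | h) <;> exact absurd h (by simp)),
        if_neg (by rintro ⟨h, -⟩; exact hi h)]
  calc (Multiset.map (fun i => degE (Sum.inl w : W ⊕ Fin (r+1)) s(aVert w0 i, Sum.inr (i+1)))
          Finset.univ.val).sum
      = ∑ i : Fin (r+1), (if i = 0 ∧ w = w0 then 1 else 0) := by
        rw [Finset.sum]
        exact congrArg Multiset.sum (Multiset.map_congr rfl (fun i _ => key i))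
    _ = if w = w0 then 1 else 0 := by
        by_cases hw : w = w0
        · simp only [hw, and_true, if_pos]
          rw [Finset.sum_ite_eq' Finset.univ (0 : Fin (r+1)) (fun _ => 1),
            if_pos (Finset.mem_univ _)]
        · simp [hw]

lemma map_cyc {W V : Type} (w0 : W) (r : ℕ) (φ : W → V) (v : Fin (r+1) → V)
    (hw0 : φ w0 = v 0) :
    (cycEdges w0 r).map (Sym2.map (Sum.elim φ v)) =
      Multiset.map (fun i : Fin (r+1) => s(v i, v (i+1))) Finset.univ.val := by
  rw [cycEdges, Multiset.map_map]
  refine Multiset.map_congr rfl (fun i _ => ?_)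
  simp only [Function.comp_apply, Sym2.map_pair_eq, Sum.elim_inr]
  congr 1
  rw [aVert]
  by_cases hi : i = 0
  · rw [if_pos hi, Sum.elim_inl, hw0, hi]
  · rw [if_neg hi, Sum.elim_inr]

lemma degE_map_inl {W X : Type} (w : W) (e : Sym2 W) :
    degE (Sum.inl w : W ⊕ X) (Sym2.map Sum.inl e) = degE w e := by
  induction e using Sym2.ind with
  | _ a b =>
    rw [Sym2.map_pair_eq, degE_mk, degE_mk]
    have h1 : ((Sum.inl a : W ⊕ X) = Sum.inl w ∧ (Sum.inl b : W ⊕ X) = Sum.inl w) ↔ (a = w ∧ b = w) := by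
      simp
    have h2 : ((Sum.inl w : W ⊕ X) = Sum.inl a ∨ (Sum.inl w : W ⊕ X) = Sum.inl b) ↔ (w = a ∨ w = b) := by
      simp
    by_cases hc1 : a = w ∧ b = w
    · rw [if_pos (h1.mpr hc1), if_pos hc1]
    · rw [if_neg (fun h => hc1 (h1.mp h)), if_neg hc1]
      by_cases hc2 : w = a ∨ w = b
      · rw [if_pos (h2.mpr hc2), if_pos hc2]
      · rw [if_neg (fun h => hc2 (h2.mp h)), if_neg hc2]

lemma degE_map_inl_inr {W X : Type} (j : X) (e : Sym2 W) :
    degE (Sum.inr j : W ⊕ X) (Sym2.map Sum.inl e) = 0 := by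
  induction e using Sym2.ind with
  | _ a b =>
    rw [Sym2.map_pair_eq, degE_mk]
    rw [if_neg (by rintro ⟨h, -⟩; exact absurd h (by simp)),
      if_neg (by rintro (h | h) <;> exact absurd h (by simp))]

lemma exists_rel_ne {W : Type} {R : W → W → Prop} {a : W} :
    ∀ {b : W}, Relation.ReflTransGen R a b → b ≠ a → ∃ c, c ≠ a ∧ R a c := by
  intro b h
  induction h with
  | refl => exact fun h => absurd rfl h
  | @tail c d h1 h2 ih =>
    intro hd
    by_cases hc : c = a
    · exact ⟨d, hd, hc ▸ h2⟩
    · exact ih hc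

lemma extend_kTrail {V : Type} [Finite V] (hV : 2 ≤ Nat.card V) {k : ℕ} (hk : 2 ≤ k)
    {U : Multiset (Sym2 V)} (hUtrail : IsKTrail (Multigraph.mk U) k)
    {r : ℕ} (v : Fin (r+1) → V) :
    IsKTrail (Multigraph.mk
      (U + Multiset.map (fun i : Fin (r+1) => s(v i, v (i+1))) Finset.univ.val)) k := by
  classical
  obtain ⟨W, hWfin, H, φ, hconn, hdeg, hφsurj, hφcount⟩ := hUtrail
  have hUeq : U = H.edges.map (Sym2.map φ) := by
    refine Multiset.ext.mpr (fun e => ?_)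
    induction e using Sym2.ind with
    | _ a b => exact hφcount a b
  have hVnt : Nontrivial V := Finite.one_lt_card_iff_nontrivial.mp (by omega)
  obtain ⟨u, hu⟩ := exists_ne (v 0)
  obtain ⟨w0, hw0⟩ := hφsurj (v 0)
  obtain ⟨wu, hwu⟩ := hφsurj u
  obtain ⟨x, hxne, hxadj⟩ := exists_rel_ne (hconn.2 w0 wu)
      (fun h => hu (by rw [← hwu, h, hw0]))
  have hw0x : w0 ≠ x := hxne.symm
  obtain ⟨rest, hrest⟩ := Multiset.exists_cons_of_mem hxadj
  set E' : Multiset (Sym2 (W ⊕ Fin (r+1))) :=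
    Multiset.map (Sym2.map Sum.inl) rest +
      (s(Sum.inl x, (Sum.inr 0 : W ⊕ Fin (r+1))) ::ₘ cycEdges w0 r) with hE'
  refine ⟨W ⊕ Fin (r+1), inferInstance, ⟨E'⟩, Sum.elim φ v, ?_, ?_, ?_, ?_⟩
  -- Connectivity
  · set R := Multigraph.Adj (⟨E'⟩ : Multigraph (W ⊕ Fin (r+1))) with hR
    have hmemcyc : ∀ i : Fin (r+1), R (aVert w0 i) (Sum.inr (i+1)) := by
      intro i
      refine Multiset.mem_add.mpr (Or.inr (Multiset.mem_cons_of_mem ?_))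
      exact Multiset.mem_map_of_mem _ (Finset.mem_val.mpr (Finset.mem_univ i))
    have hsymm : Symmetric R := by
      intro p q h
      rw [hR, Multigraph.Adj, Sym2.eq_swap]
      exact h
    have hsymT : Symmetric (Relation.ReflTransGen R) := fun a b h => by
      haveI : Std.Symm R := ⟨fun a b h => hsymm h⟩
      exact Relation.ReflTransGen.symmetric.symm a b h
    have hstep : ∀ m : ℕ, ∀ hm : m ≤ r,
        Relation.ReflTransGen R (Sum.inl w0) (Sum.inr ((⟨m, by omega⟩ : Fin (r+1)) + 1)) := by
      intro m
      induction m with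
      | zero =>
        intro hm
        have h0 : (⟨0, by omega⟩ : Fin (r+1)) = 0 := rfl
        rw [h0]
        refine Relation.ReflTransGen.single ?_
        have := hmemcyc 0
        rwa [aVert, if_pos rfl] at this
      | succ m ih =>
        intro hm
        have he : ((⟨m, by omega⟩ : Fin (r+1)) + 1) = (⟨m+1, by omega⟩ : Fin (r+1)) := by
          apply Fin.ext
          simp [Fin.val_add, Nat.mod_eq_of_lt (show m + 1 < r + 1 by omega)]
        have step := hmemcyc (⟨m+1, by omega⟩ : Fin (r+1))
        rw [aVert, if_neg (by intro h; exact absurd (congrArg Fin.val h) (by simp))] at step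
        exact Relation.ReflTransGen.tail (he ▸ ih (by omega)) step
    have hconn0 : ∀ j : Fin (r+1), Relation.ReflTransGen R (Sum.inl w0) (Sum.inr j) := by
      intro j
      by_cases hj : j = 0
      · subst hj
        have := hstep r le_rfl
        have he : ((⟨r, by omega⟩ : Fin (r+1)) + 1) = (0 : Fin (r+1)) := by
          apply Fin.ext
          simp [Fin.val_add]
        rwa [he] at this
      · have hjv : 1 ≤ j.val := by
          rcases Nat.eq_zero_or_pos j.val with h | h
          · exact absurd (Fin.ext h) hj
          · omega
        have := hstep (j.val - 1) (by omega)
        have he : ((⟨j.val - 1, by omega⟩ : Fin (r+1)) + 1) = j := by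
          apply Fin.ext
          have : j.val < r + 1 := j.isLt
          simp [Fin.val_add, Nat.mod_eq_of_lt (show j.val - 1 + 1 < r + 1 by omega)]
          omega
        rwa [he] at this
    have hedge0 : R (Sum.inl x) (Sum.inr 0) := by
      exact Multiset.mem_add.mpr (Or.inr (Multiset.mem_cons_self _ _))
    have hconnx : Relation.ReflTransGen R (Sum.inl w0) (Sum.inl x) :=
      Relation.ReflTransGen.tail (hconn0 0) (hsymm hedge0)
    have hliftadj : ∀ {a b : W}, H.Adj a b →
        Relation.ReflTransGen R (Sum.inl a) (Sum.inl b) := by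
      intro a b hab
      rw [Multigraph.Adj, hrest, Multiset.mem_cons] at hab
      rcases hab with h | h
      · rw [Sym2.eq_iff] at h
        rcases h with ⟨ha, hb⟩ | ⟨ha, hb⟩
        · subst ha; subst hb; exact hconnx
        · subst ha; subst hb; exact hsymT hconnx
      · refine Relation.ReflTransGen.single ?_
        refine Multiset.mem_add.mpr (Or.inl ?_)
        have := Multiset.mem_map_of_mem (Sym2.map (Sum.inl : W → W ⊕ Fin (r+1))) h
        rwa [Sym2.map_pair_eq] at this
    have hliftwalk : ∀ {a b : W}, Relation.ReflTransGen H.Adj a b →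
        Relation.ReflTransGen R (Sum.inl a) (Sum.inl b) := by
      intro a b h
      induction h with
      | refl => exact Relation.ReflTransGen.refl
      | tail h1 h2 ih => exact ih.trans (hliftadj h2)
    have hto : ∀ z : W ⊕ Fin (r+1), Relation.ReflTransGen R (Sum.inl w0) z := by
      intro z
      cases z with
      | inl w => exact hliftwalk (hconn.2 w0 w)
      | inr j => exact hconn0 j
    exact ⟨⟨Sum.inl w0⟩, fun p q => (hsymT (hto p)).trans (hto q)⟩
  -- Degrees
  · intro w'
    have degsplit : deg ⟨E'⟩ w' =
        deg ⟨Multiset.map (Sym2.map (Sum.inl : W → W ⊕ Fin (r+1))) rest⟩ w' +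
          (degE w' s(Sum.inl x, (Sum.inr 0 : W ⊕ Fin (r+1))) + deg ⟨cycEdges w0 r⟩ w') := by
      rw [deg_eq, deg_eq, deg_eq, hE', Multiset.map_add, Multiset.map_cons,
        Multiset.sum_add, Multiset.sum_cons]
    have hdegH : ∀ w : W, degE w s(w0, x) + deg ⟨rest⟩ w ≤ k := by
      intro w
      have h := hdeg w
      have h2 : deg H w = (H.edges.map (degE w)).sum := rfl
      rw [h2, hrest, Multiset.map_cons, Multiset.sum_cons] at h
      exact h
    rw [degsplit]
    cases w' with
    | inl w =>
      have h5 : deg ⟨Multiset.map (Sym2.map (Sum.inl : W → W ⊕ Fin (r+1))) rest⟩ (Sum.inl w)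
          = deg ⟨rest⟩ w := by
        rw [deg_eq, deg_eq, Multiset.map_map]
        exact congrArg Multiset.sum (Multiset.map_congr rfl fun e _ => degE_map_inl w e)
      have h6 : degE (Sum.inl w : W ⊕ Fin (r+1)) s(Sum.inl x, (Sum.inr 0 : W ⊕ Fin (r+1)))
          = if w = x then 1 else 0 := by
        rw [degE_mk]
        rw [if_neg (by rintro ⟨-, h⟩; exact absurd h (by simp))]
        by_cases hw : w = x
        · rw [if_pos (by left; rw [hw]), if_pos hw]
        · rw [if_neg, if_neg hw]
          rintro (h | h)
          · exact hw (by simpa using h)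
          · exact absurd h (by simp)
      have h7 : degE w s(w0, x) = if w = w0 ∨ w = x then 1 else 0 := by
        rw [degE_mk]
        rw [if_neg (by rintro ⟨h1, h2⟩; exact hw0x (h1.trans h2.symm))]
      rw [h5, h6, deg_cyc_inl]
      have := hdegH w
      rw [h7] at this
      by_cases hw1 : w = w0 <;> by_cases hw2 : w = x
      · exact absurd (hw1.symm.trans hw2) hw0x
      · rw [if_pos hw1, if_neg hw2]
        rw [if_pos (Or.inl hw1)] at this
        omega
      · rw [if_pos hw2, if_neg hw1]
        rw [if_pos (Or.inr hw2)] at this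
        omega
      · rw [if_neg hw1, if_neg hw2]
        rw [if_neg (show ¬(w = w0 ∨ w = x) by rintro (h | h); exacts [hw1 h, hw2 h])] at this
        omega
    | inr j =>
      have h5 : deg ⟨Multiset.map (Sym2.map (Sum.inl : W → W ⊕ Fin (r+1))) rest⟩ (Sum.inr j)
          = 0 := by
        rw [deg_eq, Multiset.map_map]
        refine Multiset.sum_eq_zero ?_
        intro n hn
        obtain ⟨e, -, he⟩ := Multiset.mem_map.mp hn
        rw [← he]
        exact degE_map_inl_inr j e
      have h6 : degE (Sum.inr j : W ⊕ Fin (r+1)) s(Sum.inl x, (Sum.inr 0 : W ⊕ Fin (r+1)))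
          = if j = 0 then 1 else 0 := by
        rw [degE_mk]
        rw [if_neg (by rintro ⟨h, -⟩; exact absurd h (by simp))]
        by_cases hj : j = 0
        · rw [if_pos (by right; rw [hj]), if_pos hj]
        · rw [if_neg, if_neg hj]
          rintro (h | h)
          · exact absurd h (by simp)
          · exact hj (by simpa using h)
      rw [h5, h6, deg_cyc_inr]
      by_cases hj : j = 0 <;> simp [hj] <;> omega
  -- Surjectivity
  · intro y
    obtain ⟨w, hw⟩ := hφsurj y
    exact ⟨Sum.inl w, hw⟩
  -- Counts
  · have himg : U + Multiset.map (fun i : Fin (r+1) => s(v i, v (i+1))) Finset.univ.val =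
        E'.map (Sym2.map (Sum.elim φ v)) := by
      rw [hE', Multiset.map_add, Multiset.map_cons, map_cyc w0 r φ v hw0, Multiset.map_map]
      have h8 : ∀ e : Sym2 W,
          (Sym2.map (Sum.elim φ v) ∘ Sym2.map (Sum.inl : W → W ⊕ Fin (r+1))) e
            = Sym2.map φ e := by
        intro e
        induction e using Sym2.ind with
        | _ a b => simp [Sym2.map_pair_eq]
      rw [Multiset.map_congr rfl (fun e _ => h8 e)]
      have h9 : Sym2.map (Sum.elim φ v) s(Sum.inl x, (Sum.inr 0 : W ⊕ Fin (r+1)))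
          = s(v 0, φ x) := by
        rw [Sym2.map_pair_eq]
        simp [Sym2.eq_swap]
      rw [h9, hUeq, hrest, Multiset.map_cons, Sym2.map_pair_eq, hw0]
      rw [Multiset.cons_add, Multiset.add_cons]
    intro p q
    rw [himg]

open Classical in
/-- If `(V, U)` is a `k`-trail contained in `G` with `|U|` maximum, then `(V, E ∖ U)`
is acyclic. -/
theorem max_kTrail_complement_acyclic {V : Type} [Finite V]
    (hV : 2 ≤ Nat.card V)
    (G : Multigraph V) (k : ℕ) (hk : 2 ≤ k)
    (U : Multiset (Sym2 V)) (hU : U ≤ G.edges)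
    (hUtrail : IsKTrail (Multigraph.mk U) k)
    (hmax : ∀ U' : Multiset (Sym2 V), U' ≤ G.edges → IsKTrail (Multigraph.mk U') k →
      Multiset.card U' ≤ Multiset.card U) :
    ¬ ∃ C : Multiset (Sym2 V), IsCycleEdges (Multigraph.mk (G.edges - U)) C := by
  rintro ⟨C, r, v, -, hCeq, hCle⟩
  have hUC : U + C ≤ G.edges := by
    have h1 : C + U ≤ (G.edges - U) + U := add_le_add_left hCle U
    rwa [tsub_add_cancel_of_le hU, add_comm] at h1
  have htrail : IsKTrail (Multigraph.mk (U + C)) k := by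
    rw [hCeq]
    exact extend_kTrail hV hk hUtrail v
  have hcard := hmax (U + C) hUC htrail
  rw [Multiset.card_add] at hcard
  have hC : Multiset.card C = r + 1 := by
    rw [hCeq, Multiset.card_map]
    simp
  omega
end

section
/- Let k ≥ 3 be an integer and let G̃ = (Ṽ, Ẽ) be a 3-regular multigraph. Let G = (V, E) be the multigraph obtained from G̃ by adding, for each vertex v ∈ Ṽ, exactly k − 2 new distinct pendant vertices v_1, …, v_{k−2} and the edges {v, v_i} for 1 ≤ i ≤ k − 2. Then G contains a k-trail if and only if G̃ contains a 2-trail. -/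
open Multigraph

namespace PendantProof
open Multiset

lemma msum_mono {s t : Multiset ℕ} (h : s ≤ t) : s.sum ≤ t.sum := by
  obtain ⟨u, rfl⟩ := Multiset.le_iff_exists_add.1 h
  simp

lemma sum_map_ite {A : Type} [DecidableEq A] (X : Multiset A) (c : A) :
    (X.map fun e => if e = c then (1:ℕ) else 0).sum = X.count c := by
  induction X using Multiset.induction with
  | empty => simp
  | cons a s ih =>
    by_cases h : a = c
    · subst h; simp [ih, Nat.add_comm]
    · rw [Multiset.count_cons_of_ne (Ne.symm h)]; simp [h, ih]

lemma sum_map_finsum {A B : Type} (X : Multiset A) (s : Finset B) (g : B → A → ℕ) :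
    (X.map fun f => ∑ w ∈ s, g w f).sum = ∑ w ∈ s, (X.map (g w)).sum := by
  induction X using Multiset.induction with
  | empty => simp
  | cons a t ih => simp [ih, Finset.sum_add_distrib]

open Classical

noncomputable def wt {A : Type} (v : A) (e : Sym2 A) : ℕ :=
  if e = Sym2.diag v then 2 else if v ∈ e then 1 else 0

lemma wt_mk {A : Type} (v a b : A) :
    wt v s(a, b) = (if v = a then 1 else 0) + (if v = b then 1 else 0) := by
  unfold wt
  by_cases hva : v = a <;> by_cases hvb : v = b <;>
    simp_all [Sym2.diag, Sym2.eq_iff, Sym2.mem_iff, eq_comm]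

lemma wt_sym2map {A B : Type} [Fintype A] (φ : A → B) (v : B) (e : Sym2 A)
    [DecidablePred (fun w : A => φ w = v)] :
    wt v (Sym2.map φ e) = ∑ w ∈ Finset.univ.filter (fun w => φ w = v), wt w e := by
  induction e using Sym2.ind with
  | _ a b =>
    rw [Sym2.map_pair_eq, wt_mk]
    rw [Finset.sum_filter]
    have hpt : ∀ w : A, (if φ w = v then wt w s(a,b) else 0) =
        (if w = a then (if v = φ a then 1 else 0) else 0) +
        (if w = b then (if v = φ b then 1 else 0) else 0) := by
      intro w
      rw [wt_mk]
      by_cases h1 : w = a <;> by_cases h2 : w = b <;> by_cases h3 : φ w = v <;>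
        simp_all [eq_comm]
    rw [Finset.sum_congr rfl (fun w _ => hpt w), Finset.sum_add_distrib]
    simp [Finset.sum_ite_eq']

lemma deg_def {A : Type} (X : Multiset (Sym2 A)) (v : A) :
    (Multigraph.mk X).deg v = (X.map (wt v)).sum := by
  simp only [Multigraph.deg, wt]
  rfl

lemma deg_add {A : Type} (X Y : Multiset (Sym2 A)) (v : A) :
    (Multigraph.mk (X + Y)).deg v = (Multigraph.mk X).deg v + (Multigraph.mk Y).deg v := by
  simp [deg_def]

lemma deg_mono {A : Type} {X Y : Multiset (Sym2 A)} (h : X ≤ Y) (v : A) :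
    (Multigraph.mk X).deg v ≤ (Multigraph.mk Y).deg v := by
  rw [deg_def, deg_def]; exact msum_mono (Multiset.map_le_map h)

lemma deg_map_sum {A B : Type} [Fintype A] (φ : A → B) (X : Multiset (Sym2 A)) (v : B)
    [DecidablePred (fun w : A => φ w = v)] :
    (Multigraph.mk (X.map (Sym2.map φ))).deg v
      = ∑ w ∈ Finset.univ.filter (fun w => φ w = v), (Multigraph.mk X).deg w := by
  rw [deg_def, Multiset.map_map]
  have h1 : X.map (wt v ∘ Sym2.map φ)
      = X.map (fun f => ∑ w ∈ Finset.univ.filter (fun w => φ w = v), wt w f) :=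
    Multiset.map_congr rfl (fun f _ => wt_sym2map φ v f)
  rw [h1, sum_map_finsum]
  exact Finset.sum_congr rfl (fun w _ => (deg_def X w).symm)

lemma wt_map_inj {A B : Type} {ι : A → B} (hι : Function.Injective ι) (w : A) (e : Sym2 A) :
    wt (ι w) (Sym2.map ι e) = wt w e := by
  induction e using Sym2.ind with
  | _ a b => rw [Sym2.map_pair_eq, wt_mk, wt_mk]; simp [hι.eq_iff]

lemma deg_map_inj {A B : Type} {ι : A → B} (hι : Function.Injective ι)
    (X : Multiset (Sym2 A)) (w : A) :
    (Multigraph.mk (X.map (Sym2.map ι))).deg (ι w) = (Multigraph.mk X).deg w := by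
  rw [deg_def, Multiset.map_map, deg_def]
  exact congrArg _ (Multiset.map_congr rfl fun e _ => wt_map_inj hι w e)

lemma one_le_wt {A : Type} {v : A} {e : Sym2 A} (h : v ∈ e) : 1 ≤ wt v e := by
  induction e using Sym2.ind with
  | _ a b =>
    rw [wt_mk]
    rcases Sym2.mem_iff.1 h with rfl | rfl <;> simp

lemma one_le_deg_of_mem {A : Type} {X : Multiset (Sym2 A)} {e : Sym2 A} (he : e ∈ X)
    {v : A} (hv : v ∈ e) : 1 ≤ (Multigraph.mk X).deg v := by
  rw [deg_def]
  exact le_trans (one_le_wt hv)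
    (Multiset.single_le_sum (fun x _ => Nat.zero_le x) _ (Multiset.mem_map_of_mem _ he))

lemma two_le_deg {A : Type} {X : Multiset (Sym2 A)} {e₁ e₂ : Sym2 A}
    (h1 : e₁ ∈ X) (h2 : e₂ ∈ X) (hne : e₁ ≠ e₂) {v : A} (hv1 : v ∈ e₁) (hv2 : v ∈ e₂) :
    2 ≤ (Multigraph.mk X).deg v := by
  have hle : (e₁ ::ₘ {e₂}) ≤ X := by
    rw [Multiset.le_iff_count]
    intro a
    rw [Multiset.count_cons, Multiset.count_singleton]
    by_cases ha1 : a = e₁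
    · subst ha1
      simp [hne]
      exact Multiset.one_le_count_iff_mem.2 h1
    · by_cases ha2 : a = e₂
      · subst ha2
        simp [ha1]
        exact Multiset.one_le_count_iff_mem.2 h2
      · simp [ha1, ha2]
  calc 2 ≤ (Multigraph.mk (e₁ ::ₘ {e₂})).deg v := by
            rw [deg_def]
            simp only [Multiset.map_cons, Multiset.map_singleton, Multiset.sum_cons,
              Multiset.sum_singleton]
            have := one_le_wt hv1; have := one_le_wt hv2; omega
    _ ≤ _ := deg_mono hle v

lemma exists_edge_of_connected {A : Type} {G : Multigraph A} (hc : Multigraph.Connected G)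
    {w u : A} (hne : u ≠ w) : ∃ x, s(w, x) ∈ G.edges := by
  rcases Relation.ReflTransGen.cases_head (hc.2 w u) with h | ⟨x, hadj, _⟩
  · exact absurd h.symm hne
  · exact ⟨x, hadj⟩

lemma one_le_deg_of_connected {A : Type} {G : Multigraph A} (hc : Multigraph.Connected G)
    {w u : A} (hne : u ≠ w) : 1 ≤ G.deg w := by
  obtain ⟨x, hx⟩ := exists_edge_of_connected hc hne
  have : 1 ≤ (Multigraph.mk G.edges).deg w :=
    one_le_deg_of_mem hx (Sym2.mem_mk_left w x)
  exact this

lemma adj_symm {A : Type} {G : Multigraph A} {x y : A} (h : G.Adj x y) : G.Adj y x := by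
  unfold Multigraph.Adj at *
  rwa [Sym2.eq_swap]

lemma msum_mono' {A : Type} (X : Multiset A) (f g : A → ℕ) (h : ∀ a, f a ≤ g a) :
    (X.map f).sum ≤ (X.map g).sum := by
  induction X using Multiset.induction with
  | empty => simp
  | cons a t ih => simp only [Multiset.map_cons, Multiset.sum_cons]; exact Nat.add_le_add (h a) ih

lemma rtg_symm {A : Type} {G : Multigraph A} {x y : A}
    (h : Relation.ReflTransGen G.Adj x y) : Relation.ReflTransGen G.Adj y x :=
  by
    induction h with
    | refl => exact Relation.ReflTransGen.refl
    | tail _ hab ih => exact Relation.ReflTransGen.head (adj_symm hab) ih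

lemma isHomImage_iff {V W : Type} (G : Multigraph V) (H : Multigraph W) (φ : W → V) :
    Multigraph.IsHomImage G H φ ↔
      Function.Surjective φ ∧ G.edges = H.edges.map (Sym2.map φ) := by
  constructor
  · rintro ⟨hs, hc⟩
    refine ⟨hs, Multiset.ext.2 fun e => ?_⟩
    induction e using Sym2.ind with
    | _ u v => exact hc u v
  · rintro ⟨hs, he⟩
    exact ⟨hs, fun u v => by rw [he]⟩

lemma backward_dir {Vt : Type} [Fintype Vt] (Gt : Multigraph Vt) (k : ℕ) (hk : 3 ≤ k)
    (h : Multigraph.ContainsKTrail Gt 2) :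
    Multigraph.ContainsKTrail
      (Multigraph.mk (V := Vt ⊕ Vt × Fin (k - 2))
        (Gt.edges.map (Sym2.map Sum.inl) +
          Multiset.map (fun p : Vt × Fin (k - 2) => s(Sum.inl p.1, Sum.inr p))
            Finset.univ.val)) k := by
  classical
  obtain ⟨U, hU, W, hWfin, H, φ, hconn, hdeg, hhom⟩ := h
  haveI := hWfin
  obtain ⟨hsurj, hedges⟩ := (isHomImage_iff _ _ _).1 hhom
  set B : Multiset (Sym2 (Vt ⊕ Vt × Fin (k - 2))) :=
    Multiset.map (fun p : Vt × Fin (k - 2) => s(Sum.inl p.1, Sum.inr p)) Finset.univ.val with hB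
  choose σ hσ using hsurj
  set W' := W ⊕ Vt × Fin (k - 2) with hW'
  set φ' : W' → Vt ⊕ Vt × Fin (k - 2) := Sum.map φ id with hφ'
  set Y : Multiset (Sym2 W') :=
    Multiset.map (fun p : Vt × Fin (k - 2) => s(Sum.inl (σ p.1), Sum.inr p)) Finset.univ.val
    with hY
  set H' : Multigraph W' := Multigraph.mk (H.edges.map (Sym2.map Sum.inl) + Y) with hH'
  refine ⟨U.map (Sym2.map Sum.inl) + B,
    add_le_add (Multiset.map_le_map hU) le_rfl, W', inferInstance, H', φ', ?_, ?_, ?_⟩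
  · -- connectivity
    have hstepH : ∀ x y : W, H.Adj x y → H'.Adj (Sum.inl x) (Sum.inl y) := by
      intro x y hxy
      show s(Sum.inl x, Sum.inl y) ∈ _
      exact Multiset.mem_add.2 (Or.inl (Multiset.mem_map_of_mem _ hxy))
    have hpend : ∀ p : Vt × Fin (k - 2), H'.Adj (Sum.inl (σ p.1)) (Sum.inr p) := by
      intro p
      show s(Sum.inl (σ p.1), Sum.inr p) ∈ _
      exact Multiset.mem_add.2 (Or.inr (Multiset.mem_map_of_mem _ (Finset.mem_univ p)))
    have hll : ∀ x y : W, Relation.ReflTransGen H'.Adj (Sum.inl x) (Sum.inl y) := by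
      intro x y
      exact Relation.ReflTransGen.lift' Sum.inl
        (fun a b hab => Relation.ReflTransGen.single (hstepH a b hab)) _ _ (hconn.1.elim
          fun _ => hconn.2 x y)
    have hto : ∀ u : W', ∃ w : W, Relation.ReflTransGen H'.Adj u (Sum.inl w) := by
      rintro (w | p)
      · exact ⟨w, Relation.ReflTransGen.refl⟩
      · exact ⟨σ p.1, Relation.ReflTransGen.single (adj_symm (hpend p))⟩
    constructor
    · exact ⟨Sum.inr ⟨Classical.choice (by
        have : Nonempty Vt := ⟨φ (Classical.choice hconn.1)⟩
        exact this), ⟨0, by omega⟩⟩⟩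
    · intro u v
      obtain ⟨wu, hwu⟩ := hto u
      obtain ⟨wv, hwv⟩ := hto v
      exact (hwu.trans (hll wu wv)).trans (rtg_symm hwv)
  · -- degree bound
    rintro (w | p)
    · have hsplit : H'.deg (Sum.inl w) =
          (Multigraph.mk (H.edges.map (Sym2.map Sum.inl))).deg (Sum.inl w) +
          (Multigraph.mk Y).deg (Sum.inl w) := deg_add _ _ _
      have h1 : (Multigraph.mk (H.edges.map (Sym2.map (Sum.inl : W → W')))).deg (Sum.inl w)
          = H.deg w := deg_map_inj Sum.inl_injective H.edges w
      have h2 : (Multigraph.mk Y).deg (Sum.inl w) ≤ k - 2 := by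
        rw [deg_def, hY, Multiset.map_map]
        have hpt : ∀ p : Vt × Fin (k - 2),
            (wt (Sum.inl w : W') ∘ fun p : Vt × Fin (k-2) => s(Sum.inl (σ p.1), Sum.inr p)) p
            ≤ (if p.1 = φ w then 1 else 0) := by
          intro p
          simp only [Function.comp_apply]
          rw [wt_mk]
          by_cases hp : w = σ p.1
          · have hpw : p.1 = φ w := by rw [hp, hσ]
            rw [if_pos (by rw [hp]), if_neg (by simp), if_pos hpw]
          · rw [if_neg (by simp [Sum.inl.injEq]; exact fun h => hp h), if_neg (by simp)]
            simp
        calc (Multiset.map _ Finset.univ.val).sum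
            ≤ (Multiset.map (fun p : Vt × Fin (k-2) => if p.1 = φ w then 1 else 0)
                Finset.univ.val).sum := by
              apply msum_mono'
              exact hpt
          _ = ∑ p : Vt × Fin (k - 2), (if p.1 = φ w then 1 else 0) := rfl
          _ = k - 2 := by
              rw [Fintype.sum_prod_type]
              have h1 : ∀ a : Vt, (∑ _i : Fin (k-2), (if a = φ w then (1:ℕ) else 0))
                  = (if a = φ w then k-2 else 0) := by
                intro a; by_cases h : a = φ w <;> simp [h]
              rw [Finset.sum_congr rfl fun a _ => h1 a, Finset.sum_ite_eq']
              simp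
      have := hdeg w
      rw [hsplit, h1]
      omega
    · have hsplit : H'.deg (Sum.inr p) =
          (Multigraph.mk (H.edges.map (Sym2.map Sum.inl))).deg (Sum.inr p) +
          (Multigraph.mk Y).deg (Sum.inr p) := deg_add _ _ _
      have h1 : (Multigraph.mk (H.edges.map (Sym2.map (Sum.inl : W → W')))).deg (Sum.inr p)
          = 0 := by
        rw [deg_def, Multiset.map_map]
        apply Multiset.sum_eq_zero
        intro x hx
        obtain ⟨f, _, rfl⟩ := Multiset.mem_map.1 hx
        induction f using Sym2.ind with
        | _ a b => simp [Function.comp_apply, Sym2.map_pair_eq, wt_mk]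
      have h2 : (Multigraph.mk Y).deg (Sum.inr p) ≤ 1 := by
        rw [deg_def, hY, Multiset.map_map]
        have : ∀ q : Vt × Fin (k - 2),
            (wt (Sum.inr p : W') ∘ fun q : Vt × Fin (k-2) => s(Sum.inl (σ q.1), Sum.inr q)) q
            ≤ (if q = p then 1 else 0) := by
          intro q
          simp only [Function.comp_apply]
          rw [wt_mk]
          by_cases hq : q = p
          · subst hq; simp
          · simp [hq, Ne.symm hq]
        calc (Multiset.map _ Finset.univ.val).sum
            ≤ (Multiset.map (fun q : Vt × Fin (k-2) => if q = p then 1 else 0)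
                Finset.univ.val).sum := msum_mono' _ _ _ this
          _ = ∑ q : Vt × Fin (k - 2), (if q = p then 1 else 0) := rfl
          _ ≤ 1 := by rw [Finset.sum_ite_eq']; simp
      rw [hsplit, h1]
      omega
  · -- hom image
    rw [isHomImage_iff]
    constructor
    · rintro (v | p)
      · exact ⟨Sum.inl (σ v), by simp [hφ', hσ]⟩
      · exact ⟨Sum.inr p, rfl⟩
    · show U.map (Sym2.map Sum.inl) + B = _
      rw [hH']
      show _ = (H.edges.map (Sym2.map Sum.inl) + Y).map (Sym2.map φ')
      rw [Multiset.map_add, hY, Multiset.map_map, Multiset.map_map]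
      congr 1
      · have hedges' : U = H.edges.map (Sym2.map φ) := hedges
        rw [hedges', Multiset.map_map]
        apply Multiset.map_congr rfl
        intro f _
        simp only [Function.comp_apply]
        rw [Sym2.map_map, Sym2.map_map]
        rfl
      · apply Multiset.map_congr rfl
        intro q _
        simp only [Function.comp_apply, Sym2.map_pair_eq, hφ', Sum.map_inl, Sum.map_inr,
          hσ, id_eq]

lemma forward_dir {Vt : Type} [Fintype Vt] (hV : 2 ≤ Nat.card Vt)
    (Gt : Multigraph Vt) (h3 : ∀ v : Vt, Gt.deg v = 3) (k : ℕ) (hk : 3 ≤ k)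
    (h : Multigraph.ContainsKTrail
      (Multigraph.mk (V := Vt ⊕ Vt × Fin (k - 2))
        (Gt.edges.map (Sym2.map Sum.inl) +
          Multiset.map (fun p : Vt × Fin (k - 2) => s(Sum.inl p.1, Sum.inr p))
            Finset.univ.val)) k) :
    Multigraph.ContainsKTrail Gt 2 := by
  classical
  obtain ⟨U', hU', W, hWfin, H, φ, hconn, hdeg, hhom⟩ := h
  haveI := hWfin
  haveI : Fintype W := Fintype.ofFinite W
  obtain ⟨hsurj, hedges⟩ := (isHomImage_iff _ _ _).1 hhom
  have hedges' : U' = H.edges.map (Sym2.map φ) := hedges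
  clear hedges hhom
  set A : Multiset (Sym2 (Vt ⊕ Vt × Fin (k - 2))) := Gt.edges.map (Sym2.map Sum.inl) with hA
  set B : Multiset (Sym2 (Vt ⊕ Vt × Fin (k - 2))) :=
    Multiset.map (fun p : Vt × Fin (k - 2) => s(Sum.inl p.1, Sum.inr p)) Finset.univ.val with hB
  set pend : Vt × Fin (k - 2) → Sym2 (Vt ⊕ Vt × Fin (k - 2)) :=
    fun q => s(Sum.inl q.1, Sum.inr q) with hpend
  set ψ : Sym2 W → Sym2 (Vt ⊕ Vt × Fin (k - 2)) := Sym2.map φ with hψ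

  -- shape of edges of G
  have hshape : ∀ e ∈ U', (∃ a b : Vt, e = s(Sum.inl a, Sum.inl b)) ∨ ∃ q, e = pend q := by
    intro e he
    have : e ∈ A + B := Multiset.mem_of_le hU' he
    rcases Multiset.mem_add.1 this with hA' | hB'
    · obtain ⟨f, _, rfl⟩ := Multiset.mem_map.1 hA'
      induction f using Sym2.ind with
      | _ a b => exact Or.inl ⟨a, b, by rw [Sym2.map_pair_eq]⟩
    · obtain ⟨q, _, rfl⟩ := Multiset.mem_map.1 hB'
      exact Or.inr ⟨q, rfl⟩
  -- two distinct vertices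
  obtain ⟨a₀, b₀, hab⟩ : ∃ a b : Vt, a ≠ b := by
    rw [Nat.card_eq_fintype_card] at hV
    exact Fintype.exists_pair_of_one_lt_card (by omega)
  have hW2 : ∀ w : W, ∃ u : W, u ≠ w := by
    intro w
    obtain ⟨wa, hwa⟩ := hsurj (Sum.inl a₀)
    obtain ⟨wb, hwb⟩ := hsurj (Sum.inl b₀)
    by_cases h : wa = w
    · refine ⟨wb, fun hh => hab ?_⟩
      subst hh; rw [h] at hwa; rw [hwa] at hwb
      exact Sum.inl_injective hwb
    · exact ⟨wa, h⟩
  have hmindeg : ∀ w : W, 1 ≤ H.deg w := fun w =>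
    one_le_deg_of_connected hconn (hW2 w).choose_spec
  -- pendant edge analysis
  have hpend_inj : ∀ q q' : Vt × Fin (k - 2), pend q = pend q' → q = q' := by
    intro q q' hqq
    rcases Sym2.eq_iff.1 hqq with ⟨_, h2⟩ | ⟨h1, _⟩
    · exact Sum.inr_injective h2
    · exact absurd h1 (by simp)
  have hpendB : ∀ q, B.count (pend q) = 1 := by
    intro q
    apply Multiset.count_eq_one_of_mem
    · exact Multiset.Nodup.map (fun x y hxy => hpend_inj x y hxy) Finset.univ.nodup
    · exact Multiset.mem_map_of_mem _ (Finset.mem_univ q)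
  have hdegGpend : ∀ q, (Multigraph.mk (A + B)).deg (Sum.inr q : Vt ⊕ Vt × Fin (k - 2)) = 1 := by
    intro q
    rw [deg_add]
    have h1 : (Multigraph.mk A).deg (Sum.inr q : Vt ⊕ Vt × Fin (k - 2)) = 0 := by
      rw [deg_def, hA, Multiset.map_map]
      apply Multiset.sum_eq_zero
      intro x hx
      obtain ⟨f, _, rfl⟩ := Multiset.mem_map.1 hx
      induction f using Sym2.ind with
      | _ a b => simp [Function.comp_apply, Sym2.map_pair_eq, wt_mk]
    have h2 : (Multigraph.mk B).deg (Sum.inr q : Vt ⊕ Vt × Fin (k - 2)) = 1 := by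
      rw [deg_def, hB, Multiset.map_map]
      have hpt : ∀ p : Vt × Fin (k - 2),
          (wt (Sum.inr q : Vt ⊕ Vt × Fin (k - 2)) ∘ pend) p = if p = q then 1 else 0 := by
        intro p
        simp only [Function.comp_apply, hpend]
        rw [wt_mk]
        by_cases hpq : p = q
        · subst hpq; simp
        · simp [hpq, Ne.symm hpq]
      rw [Multiset.map_congr rfl (fun p _ => hpt p), sum_map_ite]
      exact Multiset.count_eq_one_of_mem Finset.univ.nodup (Finset.mem_univ q)
    rw [h1, h2]
  have hdegU'pend : ∀ q, (Multigraph.mk U').deg (Sum.inr q : Vt ⊕ Vt × Fin (k - 2)) =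
      ∑ w ∈ Finset.univ.filter (fun w => φ w = Sum.inr q), H.deg w := by
    intro q
    rw [hedges']
    exact deg_map_sum φ H.edges (Sum.inr q)
  have hnotpend : ∀ (a b : Vt) (q : Vt × Fin (k - 2)),
      s(Sum.inl a, Sum.inl b) ≠ pend q := by
    intro a b q hh
    rcases Sym2.eq_iff.1 hh with ⟨_, h2⟩ | ⟨h1, _⟩
    · exact absurd h2 (by simp)
    · exact absurd h1 (by simp)
  have hpendkey : ∀ q : Vt × Fin (k - 2),
      (∀ w : W, φ w = Sum.inr q → H.deg w = 1) ∧ U'.count (pend q) = 1 := by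
    intro q
    have hle1 : (Multigraph.mk U').deg (Sum.inr q : Vt ⊕ Vt × Fin (k - 2)) ≤ 1 := by
      rw [← hdegGpend q]
      exact deg_mono hU' _
    have hge : (Finset.univ.filter (fun w => φ w = Sum.inr q)).card ≤
        (Multigraph.mk U').deg (Sum.inr q : Vt ⊕ Vt × Fin (k - 2)) := by
      rw [hdegU'pend q, Finset.card_eq_sum_ones]
      exact Finset.sum_le_sum (fun w _ => hmindeg w)
    have hne : (Finset.univ.filter (fun w => φ w = Sum.inr q)).Nonempty := by
      obtain ⟨w, hw⟩ := hsurj (Sum.inr q)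
      exact ⟨w, Finset.mem_filter.2 ⟨Finset.mem_univ w, hw⟩⟩
    have hcard1 : (Finset.univ.filter (fun w => φ w = Sum.inr q)).card = 1 :=
      le_antisymm (le_trans hge hle1) (Finset.Nonempty.card_pos hne)
    have hsum1 : ∑ w ∈ Finset.univ.filter (fun w => φ w = Sum.inr q), H.deg w = 1 := by
      have hub : ∑ w ∈ Finset.univ.filter (fun w => φ w = Sum.inr q), H.deg w ≤ 1 := by
        rw [← hdegU'pend q]; exact hle1
      obtain ⟨w, hw⟩ := hne
      have h1 : H.deg w ≤ ∑ w ∈ Finset.univ.filter (fun w => φ w = Sum.inr q), H.deg w :=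
        Finset.single_le_sum (fun _ _ => Nat.zero_le _) hw
      have := hmindeg w
      omega
    obtain ⟨w', hw'⟩ := Finset.card_eq_one.1 hcard1
    constructor
    · intro w hw
      have hwS : w ∈ Finset.univ.filter (fun w => φ w = Sum.inr q) :=
        Finset.mem_filter.2 ⟨Finset.mem_univ w, hw⟩
      rw [hw'] at hwS hsum1
      rw [Finset.mem_singleton] at hwS
      rw [Finset.sum_singleton] at hsum1
      rw [hwS, hsum1]
    · have hdc : (Multigraph.mk U').deg (Sum.inr q : Vt ⊕ Vt × Fin (k - 2))
          = U'.count (pend q) := by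
        rw [deg_def, Multiset.map_congr rfl (fun e he => ?_), sum_map_ite]
        rcases hshape e he with ⟨a, b, rfl⟩ | ⟨q', rfl⟩
        · rw [if_neg (hnotpend a b q), wt_mk]
          simp
        · rw [hpend]
          rw [wt_mk]
          by_cases hq' : q' = q
          · subst hq'; simp
          · rw [if_neg (by simp [Ne.symm hq']), if_neg (by simp [Ne.symm hq']),
              if_neg (fun hh => hq' (hpend_inj q' q hh))]
      rw [← hdc, hdegU'pend q, hsum1]
  -- decomposition
  set P : Sym2 W → Prop := fun f => ∀ x ∈ f, ∃ v : Vt, φ x = Sum.inl v with hP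
  set Fl : Multiset (Sym2 W) := H.edges.filter P with hFl
  set Fp : Multiset (Sym2 W) := H.edges.filter (fun f => ¬ P f) with hFp
  have hFlFp : Fl + Fp = H.edges := Multiset.filter_add_not P H.edges
  have hU'split : U' = Fl.map ψ + Fp.map ψ := by
    rw [hedges', ← hFlFp, Multiset.map_add]
  have hFp_shape : ∀ f ∈ Fp, ∃ q, ψ f = pend q := by
    intro f hf
    have hfH : f ∈ H.edges := (Multiset.mem_filter.1 hf).1
    have hnP : ¬ P f := (Multiset.mem_filter.1 hf).2
    have hfU : ψ f ∈ U' := hedges' ▸ Multiset.mem_map_of_mem ψ hfH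
    rcases hshape _ hfU with ⟨a, b, hab'⟩ | ⟨q, hq⟩
    · exfalso
      apply hnP
      intro x hx
      have hmem : φ x ∈ ψ f := Sym2.mem_map.2 ⟨x, hx, rfl⟩
      rw [hab'] at hmem
      rcases Sym2.mem_iff.1 hmem with h | h
      exacts [⟨a, h⟩, ⟨b, h⟩]
    · exact ⟨q, hq⟩
  have hFl_shape : ∀ f ∈ Fl, ∃ a b : Vt, ψ f = s(Sum.inl a, Sum.inl b) := by
    intro f hf
    have hfH : f ∈ H.edges := (Multiset.mem_filter.1 hf).1
    have hPf : P f := (Multiset.mem_filter.1 hf).2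
    have hfU : ψ f ∈ U' := hedges' ▸ Multiset.mem_map_of_mem ψ hfH
    rcases hshape _ hfU with ⟨a, b, hab'⟩ | ⟨q, hq⟩
    · exact ⟨a, b, hab'⟩
    · exfalso
      have hmem : (Sum.inr q : Vt ⊕ Vt × Fin (k - 2)) ∈ ψ f := by
        rw [hq, hpend]
        exact Sym2.mem_mk_right _ _
      obtain ⟨x, hx, hφx⟩ := Sym2.mem_map.1 hmem
      obtain ⟨v, hv⟩ := hPf x hx
      rw [hv] at hφx
      exact Sum.inl_ne_inr hφx
  have hmapFp : Fp.map ψ = B := by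
    apply Multiset.ext.2
    intro e
    by_cases hpe : ∃ q, e = pend q
    · obtain ⟨q, rfl⟩ := hpe
      have hcFl : (Fl.map ψ).count (pend q) = 0 := by
        rw [Multiset.count_eq_zero]
        intro hmem
        obtain ⟨f, hf, hfe⟩ := Multiset.mem_map.1 hmem
        obtain ⟨a, b, hab'⟩ := hFl_shape f hf
        rw [hab'] at hfe
        exact hnotpend a b q hfe
      have hsplitc : U'.count (pend q) = (Fl.map ψ).count (pend q) + (Fp.map ψ).count (pend q) := by
        rw [hU'split, Multiset.count_add]
      have := (hpendkey q).2
      rw [hpendB q]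
      omega
    · have h1 : (Fp.map ψ).count e = 0 := by
        rw [Multiset.count_eq_zero]
        intro hmem
        obtain ⟨f, hf, rfl⟩ := Multiset.mem_map.1 hmem
        exact hpe (hFp_shape f hf)
      have h2 : B.count e = 0 := by
        rw [Multiset.count_eq_zero]
        intro hmem
        rw [hB] at hmem
        obtain ⟨q, _, rfl⟩ := Multiset.mem_map.1 hmem
        exact hpe ⟨q, rfl⟩
      rw [h1, h2]
  -- the left part and its pullback
  set T : Multiset (Sym2 (Vt ⊕ Vt × Fin (k - 2))) := Fl.map ψ with hT
  set τ : (Vt ⊕ Vt × Fin (k - 2)) → Vt := Sum.elim id Prod.fst with hτ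
  set Ut : Multiset (Sym2 Vt) := T.map (Sym2.map τ) with hUt
  rw [hmapFp] at hU'split
  have hT_back : Ut.map (Sym2.map (Sum.inl : Vt → Vt ⊕ Vt × Fin (k - 2))) = T := by
    rw [hUt, Multiset.map_map]
    conv_rhs => rw [← Multiset.map_id T]
    apply Multiset.map_congr rfl
    intro e he
    rw [hT] at he
    obtain ⟨f, hf, rfl⟩ := Multiset.mem_map.1 he
    obtain ⟨a, b, hab'⟩ := hFl_shape f hf
    rw [Function.comp_apply, hab', Sym2.map_pair_eq, Sym2.map_pair_eq, id_eq]
    rfl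
  have hT_le_A : T ≤ A := by
    rw [Multiset.le_iff_count]
    intro e
    by_cases he : e ∈ T
    · have hcB : B.count e = 0 := by
        rw [Multiset.count_eq_zero]
        intro hmem
        rw [hT] at he
        obtain ⟨f, hf, rfl⟩ := Multiset.mem_map.1 he
        obtain ⟨a, b, hab'⟩ := hFl_shape f hf
        rw [hB] at hmem
        obtain ⟨q, _, hq⟩ := Multiset.mem_map.1 hmem
        rw [hab'] at hq
        exact hnotpend a b q hq.symm
      have hU'c : U'.count e = T.count e + B.count e := by
        rw [hU'split, Multiset.count_add]
      have hUG : U'.count e ≤ A.count e + B.count e := by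
        have := Multiset.le_iff_count.1 hU' e
        rwa [Multiset.count_add] at this
      omega
    · rw [Multiset.count_eq_zero.2 he]
      exact Nat.zero_le _
  have hUt_le : Ut ≤ Gt.edges := by
    have h1 : Ut ≤ A.map (Sym2.map τ) := by
      rw [hUt]
      exact Multiset.map_le_map hT_le_A
    have h2 : A.map (Sym2.map τ) = Gt.edges := by
      rw [hA, Multiset.map_map]
      conv_rhs => rw [← Multiset.map_id Gt.edges]
      apply Multiset.map_congr rfl
      intro e _
      rw [Function.comp_apply, Sym2.map_map]
      have hτι : τ ∘ (Sum.inl : Vt → Vt ⊕ Vt × Fin (k - 2)) = id := rfl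
      rw [hτι, Sym2.map_id, id_eq]
    rwa [h2] at h1
  have hUt3 : ∀ v, (Multigraph.mk Ut).deg v ≤ 3 := by
    intro v
    have := deg_mono hUt_le v
    exact le_trans this (le_of_eq (h3 v))
  have hdegT : ∀ v, (Multigraph.mk T).deg (Sum.inl v : Vt ⊕ Vt × Fin (k - 2)) = (Multigraph.mk Ut).deg v := by
    intro v
    rw [← hT_back]
    exact deg_map_inj Sum.inl_injective Ut v
  -- the reduced multigraph on left-preimages
  set Q : W → Prop := fun w => ∃ v : Vt, φ w = Sum.inl v with hQ
  obtain ⟨wa0, hwa0⟩ := hsurj (Sum.inl a₀)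
  have hQa0 : Q wa0 := ⟨a₀, hwa0⟩
  have hnb : ∀ w : W, ¬ Q w → ∃ x, H.Adj w x ∧ Q x := by
    intro w hw
    obtain ⟨x, hx⟩ := exists_edge_of_connected hconn ((hW2 w).choose_spec)
    have hUx : ψ s(w, x) ∈ U' := hedges' ▸ Multiset.mem_map_of_mem ψ hx
    obtain ⟨p, hp⟩ : ∃ p, φ w = Sum.inr p := by
      cases hφw : φ w with
      | inl v => exact absurd ⟨v, hφw⟩ hw
      | inr p => exact ⟨p, rfl⟩
    rcases hshape _ hUx with ⟨a, b, hab'⟩ | ⟨q, hq'⟩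
    · exfalso
      rw [hψ, Sym2.map_pair_eq, hp] at hab'
      rcases Sym2.eq_iff.1 hab' with ⟨h1, _⟩ | ⟨h1, _⟩ <;> exact Sum.inr_ne_inl h1
    · rw [hψ, Sym2.map_pair_eq, hp, hpend] at hq'
      rcases Sym2.eq_iff.1 hq' with ⟨h1, _⟩ | ⟨_, h2⟩
      · exact absurd h1 (by simp)
      · exact ⟨x, hx, ⟨q.1, h2⟩⟩
  have hdeg1 : ∀ w : W, ¬ Q w → H.deg w = 1 := by
    intro w hw
    obtain ⟨p, hp⟩ : ∃ p, φ w = Sum.inr p := by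
      cases hφw : φ w with
      | inl v => exact absurd ⟨v, hφw⟩ hw
      | inr p => exact ⟨p, rfl⟩
    exact (hpendkey p).1 w hp
  set g : W → {w : W // Q w} := fun w => if h : Q w then ⟨w, h⟩ else
    ⟨(hnb w h).choose, (hnb w h).choose_spec.2⟩ with hg
  have hgQ : ∀ (w : W) (h : Q w), g w = ⟨w, h⟩ := fun w h => by rw [hg]; exact dif_pos h
  set φt : {w : W // Q w} → Vt := fun ws => (ws.2).choose with hφt
  have hφt_spec : ∀ ws : {w : W // Q w}, φ ws.1 = Sum.inl (φt ws) := fun ws => (ws.2).choose_spec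
  set Et : Multiset (Sym2 {w : W // Q w}) := Fl.map (Sym2.map g) with hEt
  have hdegEt : ∀ ws : {w : W // Q w},
      (Multigraph.mk Et).deg ws = (Multigraph.mk Fl).deg ws.1 := by
    intro ws
    rw [hEt, deg_def, deg_def, Multiset.map_map]
    apply congrArg
    apply Multiset.map_congr rfl
    intro f hf
    have hPf : P f := (Multiset.mem_filter.1 (by rwa [hFl] at hf)).2
    rw [Function.comp_apply]
    induction f using Sym2.ind with
    | _ x y =>
      have hx : Q x := hPf x (Sym2.mem_mk_left x y)
      have hy : Q y := hPf y (Sym2.mem_mk_right x y)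
      rw [Sym2.map_pair_eq, hgQ x hx, hgQ y hy, wt_mk, wt_mk]
      have e1 : (ws = ⟨x, hx⟩) = (ws.1 = x) :=
        propext ⟨fun h => by rw [h], fun h => Subtype.ext h⟩
      have e2 : (ws = ⟨y, hy⟩) = (ws.1 = y) :=
        propext ⟨fun h => by rw [h], fun h => Subtype.ext h⟩
      rw [e1, e2]
  -- connectivity of the reduced graph
  have hstep : ∀ x y : W, H.Adj x y →
      Relation.ReflTransGen (Multigraph.mk Et).Adj (g x) (g y) := by
    have leafnb : ∀ x y : W, H.Adj x y → Q x → ¬ Q y → g y = g x := by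
      intro x y hxy hx hy
      have hdy : H.deg y = 1 := hdeg1 y hy
      have hny := (hnb y hy).choose_spec
      have hcx : (hnb y hy).choose = x := by
        by_contra hne
        have h1 : s(y, (hnb y hy).choose) ∈ H.edges := hny.1
        have h2 : s(y, x) ∈ H.edges := adj_symm hxy
        have hdiff : s(y, (hnb y hy).choose) ≠ s(y, x) := by
          intro hh
          rcases Sym2.eq_iff.1 hh with ⟨_, h4⟩ | ⟨h3, h4⟩
          · exact hne h4
          · rw [← h3] at hx; exact hy hx
        have := two_le_deg h1 h2 hdiff (Sym2.mem_mk_left _ _) (Sym2.mem_mk_left _ _)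
        have hHd : (Multigraph.mk H.edges).deg y = H.deg y := rfl
        omega
      have hgy : g y = ⟨(hnb y hy).choose, (hnb y hy).choose_spec.2⟩ := by
        rw [hg]; exact dif_neg hy
      rw [hgy, hgQ x hx]
      exact Subtype.ext hcx
    intro x y hxy
    by_cases hx : Q x <;> by_cases hy : Q y
    · apply Relation.ReflTransGen.single
      show s(g x, g y) ∈ Et
      have hfl : s(x, y) ∈ Fl := by
        rw [hFl, Multiset.mem_filter]
        refine ⟨hxy, ?_⟩
        intro z hz
        rcases Sym2.mem_iff.1 hz with rfl | rfl
        exacts [hx, hy]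
      have hmem := Multiset.mem_map_of_mem (Sym2.map g) hfl
      rw [Sym2.map_pair_eq] at hmem
      exact hmem
    · rw [leafnb x y hxy hx hy]
    · rw [leafnb y x (adj_symm hxy) hy hx]
    · exfalso
      have hUx : ψ s(x, y) ∈ U' := hedges' ▸ Multiset.mem_map_of_mem ψ hxy
      obtain ⟨p, hp⟩ : ∃ p, φ x = Sum.inr p := by
        cases hφw : φ x with
        | inl v => exact absurd ⟨v, hφw⟩ hx
        | inr p => exact ⟨p, rfl⟩
      obtain ⟨p', hp'⟩ : ∃ p, φ y = Sum.inr p := by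
        cases hφw : φ y with
        | inl v => exact absurd ⟨v, hφw⟩ hy
        | inr p => exact ⟨p, rfl⟩
      rcases hshape _ hUx with ⟨a, b, hab'⟩ | ⟨q, hq'⟩
      · rw [hψ, Sym2.map_pair_eq, hp, hp'] at hab'
        rcases Sym2.eq_iff.1 hab' with ⟨h1, _⟩ | ⟨h1, _⟩ <;> exact Sum.inr_ne_inl h1
      · rw [hψ, Sym2.map_pair_eq, hp, hp', hpend] at hq'
        rcases Sym2.eq_iff.1 hq' with ⟨h1, _⟩ | ⟨_, h2⟩
        · exact absurd h1 (by simp)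
        · exact absurd h2 (by simp)
  have hconn_t : (Multigraph.mk Et).Connected := by
    refine ⟨⟨⟨wa0, hQa0⟩⟩, ?_⟩
    intro u v
    have h2 : Relation.ReflTransGen (Multigraph.mk Et).Adj (g u.1) (g v.1) :=
      Relation.ReflTransGen.lift' g hstep _ _ (hconn.2 u.1 v.1)
    rw [hgQ u.1 u.2, hgQ v.1 v.2] at h2
    exact h2
  -- minimum degree in the reduced graph
  have hWt2 : ∀ ws : {w : W // Q w}, ∃ us : {w : W // Q w}, us ≠ ws := by
    intro ws
    obtain ⟨wa, hwa⟩ := hsurj (Sum.inl a₀)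
    obtain ⟨wb, hwb⟩ := hsurj (Sum.inl b₀)
    by_cases h : wa = ws.1
    · refine ⟨⟨wb, ⟨b₀, hwb⟩⟩, fun hh => hab ?_⟩
      have h2 : wb = ws.1 := congrArg Subtype.val hh
      rw [← h] at h2
      rw [← h2, hwb] at hwa
      exact (Sum.inl_injective hwa).symm
    · exact ⟨⟨wa, ⟨a₀, hwa⟩⟩, fun hh => h (congrArg Subtype.val hh)⟩
  have hmin_t : ∀ ws : {w : W // Q w}, 1 ≤ (Multigraph.mk Fl).deg ws.1 := by
    intro ws
    rw [← hdegEt ws]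
    exact one_le_deg_of_connected hconn_t (hWt2 ws).choose_spec
  -- degree splitting and pendant degree sums
  have hsplitdeg : ∀ w : W,
      H.deg w = (Multigraph.mk Fl).deg w + (Multigraph.mk Fp).deg w := by
    intro w
    rw [← deg_add]
    have : Fl + Fp = H.edges := hFlFp
    rw [this]
  have hmapFp' : Fp.map (Sym2.map φ) = B := hmapFp
  have hdegFp_sum : ∀ v : Vt, ∑ w ∈ Finset.univ.filter (fun w => φ w = Sum.inl v),
      (Multigraph.mk Fp).deg w = k - 2 := by
    intro v
    have h1 := deg_map_sum φ Fp (Sum.inl v)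
    rw [hmapFp'] at h1
    have h2 : (Multigraph.mk B).deg (Sum.inl v : Vt ⊕ Vt × Fin (k - 2)) = k - 2 := by
      rw [deg_def, hB, Multiset.map_map]
      have hpt : ∀ p : Vt × Fin (k - 2),
          (wt (Sum.inl v : Vt ⊕ Vt × Fin (k - 2)) ∘ pend) p = if p.1 = v then 1 else 0 := by
        intro p
        simp only [Function.comp_apply, hpend]
        rw [wt_mk]
        by_cases hp : p.1 = v
        · rw [if_pos (by rw [hp]), if_neg (by simp), if_pos hp]
        · rw [if_neg (fun hh => hp (Sum.inl_injective hh).symm), if_neg (by simp), if_neg hp]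
      rw [Multiset.map_congr rfl (fun p _ => hpt p)]
      have hrfl : (Finset.univ.val.map
          (fun p : Vt × Fin (k - 2) => if p.1 = v then (1:ℕ) else 0)).sum
          = ∑ p : Vt × Fin (k - 2), (if p.1 = v then (1:ℕ) else 0) := rfl
      rw [hrfl, Fintype.sum_prod_type]
      have h3 : ∀ a : Vt, (∑ _i : Fin (k - 2), (if a = v then (1:ℕ) else 0))
          = (if a = v then k - 2 else 0) := by
        intro a; by_cases hav : a = v <;> simp [hav]
      rw [Finset.sum_congr rfl fun a _ => h3 a, Finset.sum_ite_eq']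
      simp
    rw [← h1, h2]
  -- assemble the 2-trail
  refine ⟨Ut, hUt_le, {w : W // Q w}, inferInstance, Multigraph.mk Et, φt, hconn_t, ?_, ?_⟩
  · -- degree bound 2
    intro ws
    have hbound : (Multigraph.mk Fl).deg ws.1 ≤ 2 := by
      set v := φt ws with hv
      have hwv : φ ws.1 = Sum.inl v := hφt_spec ws
      have hwS : ws.1 ∈ Finset.univ.filter (fun w => φ w = Sum.inl v) :=
        Finset.mem_filter.2 ⟨Finset.mem_univ _, hwv⟩
      have hsumFl : ∑ w ∈ Finset.univ.filter (fun w => φ w = Sum.inl v),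
          (Multigraph.mk Fl).deg w = (Multigraph.mk T).deg (Sum.inl v : Vt ⊕ Vt × Fin (k - 2)) := by
        have h1 := deg_map_sum φ Fl (Sum.inl v)
        have hTφ : Fl.map (Sym2.map φ) = T := rfl
        rw [hTφ] at h1
        exact h1.symm
      have hT3 : (Multigraph.mk T).deg (Sum.inl v : Vt ⊕ Vt × Fin (k - 2)) ≤ 3 := by
        rw [hdegT]; exact hUt3 v
      by_contra hgt
      push_neg at hgt
      have herase : (Multigraph.mk Fl).deg ws.1 +
          ∑ w ∈ (Finset.univ.filter (fun w => φ w = Sum.inl v)).erase ws.1,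
            (Multigraph.mk Fl).deg w
          = ∑ w ∈ Finset.univ.filter (fun w => φ w = Sum.inl v), (Multigraph.mk Fl).deg w :=
        Finset.add_sum_erase _ (fun w => (Multigraph.mk Fl).deg w) hwS
      have hcard0 : ((Finset.univ.filter (fun w => φ w = Sum.inl v)).erase ws.1).card ≤
          ∑ w ∈ (Finset.univ.filter (fun w => φ w = Sum.inl v)).erase ws.1,
            (Multigraph.mk Fl).deg w := by
        rw [Finset.card_eq_sum_ones]
        apply Finset.sum_le_sum
        intro w hw
        have hwS' := Finset.mem_of_mem_erase hw
        exact hmin_t ⟨w, ⟨v, (Finset.mem_filter.1 hwS').2⟩⟩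
      have hc0 : ((Finset.univ.filter (fun w => φ w = Sum.inl v)).erase ws.1).card = 0 := by
        omega
      have hSsing : Finset.univ.filter (fun w => φ w = Sum.inl v) = {ws.1} := by
        apply Finset.eq_singleton_iff_unique_mem.2
        refine ⟨hwS, fun x hx => ?_⟩
        by_contra hne
        have : x ∈ (Finset.univ.filter (fun w => φ w = Sum.inl v)).erase ws.1 :=
          Finset.mem_erase.2 ⟨hne, hx⟩
        rw [Finset.card_eq_zero.1 hc0] at this
        exact absurd this (Finset.notMem_empty x)
      have hFpw : (Multigraph.mk Fp).deg ws.1 = k - 2 := by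
        have h := hdegFp_sum v
        rw [hSsing, Finset.sum_singleton] at h
        exact h
      have hH := hsplitdeg ws.1
      have hk' := hdeg ws.1
      omega
    rw [hdegEt ws]
    exact hbound
  · -- hom image
    rw [isHomImage_iff]
    constructor
    · intro v
      obtain ⟨w, hw⟩ := hsurj (Sum.inl v)
      refine ⟨⟨w, ⟨v, hw⟩⟩, ?_⟩
      have h1 := hφt_spec ⟨w, ⟨v, hw⟩⟩
      exact Sum.inl_injective (h1.symm.trans hw)
    · show Ut = Et.map (Sym2.map φt)
      rw [hUt, hT, hEt, Multiset.map_map, Multiset.map_map]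
      apply Multiset.map_congr rfl
      intro f hf
      have hPf : P f := (Multiset.mem_filter.1 (by rwa [hFl] at hf)).2
      rw [Function.comp_apply, Function.comp_apply, hψ, Sym2.map_map, Sym2.map_map]
      apply Sym2.map_congr
      intro x hx
      obtain ⟨v, hv⟩ := hPf x hx
      have hgx : g x = ⟨x, ⟨v, hv⟩⟩ := hgQ x ⟨v, hv⟩
      have h1 : φ x = Sum.inl (φt ⟨x, ⟨v, hv⟩⟩) := hφt_spec ⟨x, ⟨v, hv⟩⟩
      have h2 : φt ⟨x, ⟨v, hv⟩⟩ = v := Sum.inl_injective (h1.symm.trans hv)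
      show τ (φ x) = φt (g x)
      rw [hgx, h2, hv]
      rfl

end PendantProof

open PendantProof



/-- Pendant-vertex reduction: let `G` be obtained from a 3-regular multigraph `Gt` by
attaching `k - 2` new pendant vertices to each vertex of `Gt`. Then `G` contains a
`k`-trail iff `Gt` contains a `2`-trail. -/
theorem pendant_reduction {Vt : Type} [Fintype Vt]
    (hV : 2 ≤ Nat.card Vt)
    (Gt : Multigraph Vt) (h3 : ∀ v : Vt, Gt.deg v = 3)
    (k : ℕ) (hk : 3 ≤ k) :
    ContainsKTrail
      (Multigraph.mk (V := Vt ⊕ Vt × Fin (k - 2))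
        (Gt.edges.map (Sym2.map Sum.inl) +
          Multiset.map (fun p : Vt × Fin (k - 2) => s(Sum.inl p.1, Sum.inr p))
            Finset.univ.val)) k ↔
    ContainsKTrail Gt 2 :=
  ⟨forward_dir hV Gt h3 k hk, backward_dir Gt k hk⟩
end
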